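/- arXiv:2401.02915 — 3 statements merged into one kernel-verified Lean document; each statement's English description precedes it below -/
import Mathlib

section
/- Let k be a field of odd characteristic p and let i be an integer with 1 ≤ i ≤ (p−1)/2. Consider the k-algebra M = k[x,y]/(x^i, y^i), made into a module over the polynomial ring k[X] by letting X act as multiplication by x+y. Let σ : M → M be the k[X]-module involution induced by swapping x and y, and let M_S and M_A be the +1 and −1 eigenspaces of σ (so M = M_S ⊕ M_A as k[X]-modules). Then there are k[X]-module isomorphisms M_S ≅ ⊕_{1 ≤ k ≤ i, k ≡ i (mod 2)} k[X]/(X^{2k−1}) and M_A ≅ ⊕_{1 ≤ k ≤ i, k ≢ i (mod 2)} k[X]/(X^{2k−1}). -/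
open MvPolynomial

set_option synthInstance.maxHeartbeats 1000000
set_option maxHeartbeats 1000000

namespace VerlindeSymmetry

variable (k : Type*) [Field k] (i : ℕ)

/-- The ideal `(x^i, y^i)` of `k[x, y]`. -/
noncomputable def xyIdeal : Ideal (MvPolynomial (Fin 2) k) :=
  Ideal.span {(X 0 : MvPolynomial (Fin 2) k) ^ i, (X 1 : MvPolynomial (Fin 2) k) ^ i}

/-- The algebra `M = k[x, y]/(x^i, y^i)`. -/
abbrev Mxy : Type _ := MvPolynomial (Fin 2) k ⧸ xyIdeal k i

/-- The class of `x + y` in `M`. -/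
noncomputable def zElt : Mxy k i :=
  Ideal.Quotient.mk (xyIdeal k i) (X 0 + X 1)

/-- `M` as a module over the polynomial ring `k[X]`, with `X` acting as multiplication by
`x + y`. -/
noncomputable instance : Module (Polynomial k) (Mxy k i) :=
  Module.compHom (Mxy k i) (Polynomial.aeval (zElt k i)).toRingHom

lemma smul_def (c : Polynomial k) (m : Mxy k i) :
    c • m = Polynomial.aeval (zElt k i) c * m := by with_unfolding_all rfl

lemma rename_swap_mem (a : MvPolynomial (Fin 2) k) (ha : a ∈ xyIdeal k i) :
    MvPolynomial.rename (Equiv.swap (0 : Fin 2) 1) a ∈ xyIdeal k i := by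
  have hle : xyIdeal k i ≤
      (xyIdeal k i).comap (MvPolynomial.rename (Equiv.swap (0 : Fin 2) 1)).toRingHom := by
    rw [xyIdeal, Ideal.span_le]
    rintro b hb
    simp only [Set.mem_insert_iff, Set.mem_singleton_iff] at hb
    rcases hb with rfl | rfl
    · show (MvPolynomial.rename (Equiv.swap (0 : Fin 2) 1)) ((X 0 : MvPolynomial (Fin 2) k) ^ i)
        ∈ xyIdeal k i
      rw [map_pow, rename_X, Equiv.swap_apply_left]
      exact Ideal.subset_span (by simp)
    · show (MvPolynomial.rename (Equiv.swap (0 : Fin 2) 1)) ((X 1 : MvPolynomial (Fin 2) k) ^ i)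
        ∈ xyIdeal k i
      rw [map_pow, rename_X, Equiv.swap_apply_right]
      exact Ideal.subset_span (by simp)
  exact hle ha

/-- The `k`-algebra involution of `M` induced by swapping `x` and `y`. -/
noncomputable def swapInv : Mxy k i →ₐ[k] Mxy k i :=
  Ideal.Quotient.liftₐ (xyIdeal k i)
    ((Ideal.Quotient.mkₐ k (xyIdeal k i)).comp
      (MvPolynomial.rename (Equiv.swap (0 : Fin 2) 1)))
    (fun a ha => by
      show Ideal.Quotient.mk (xyIdeal k i)
        ((MvPolynomial.rename (Equiv.swap (0 : Fin 2) 1)) a) = 0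
      exact Ideal.Quotient.eq_zero_iff_mem.mpr (rename_swap_mem k i a ha))

lemma swapInv_z : swapInv k i (zElt k i) = zElt k i := by
  have h := Ideal.Quotient.liftₐ_comp (xyIdeal k i)
    ((Ideal.Quotient.mkₐ k (xyIdeal k i)).comp
      (MvPolynomial.rename (Equiv.swap (0 : Fin 2) 1)))
    (fun a ha => by
      show Ideal.Quotient.mk (xyIdeal k i)
        ((MvPolynomial.rename (Equiv.swap (0 : Fin 2) 1)) a) = 0
      exact Ideal.Quotient.eq_zero_iff_mem.mpr (rename_swap_mem k i a ha))
  have h2 := DFunLike.congr_fun h ((X 0 : MvPolynomial (Fin 2) k) + X 1)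
  simp only [AlgHom.coe_comp, Function.comp_apply, Ideal.Quotient.mkₐ_eq_mk] at h2
  have h3 : (MvPolynomial.rename (Equiv.swap (0 : Fin 2) 1))
      ((X 0 : MvPolynomial (Fin 2) k) + X 1) = X 0 + X 1 := by
    rw [map_add, rename_X, rename_X, Equiv.swap_apply_left, Equiv.swap_apply_right, add_comm]
  rw [zElt]
  rw [show swapInv k i = Ideal.Quotient.liftₐ (xyIdeal k i)
    ((Ideal.Quotient.mkₐ k (xyIdeal k i)).comp
      (MvPolynomial.rename (Equiv.swap (0 : Fin 2) 1)))
    (fun a ha => by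
      show Ideal.Quotient.mk (xyIdeal k i)
        ((MvPolynomial.rename (Equiv.swap (0 : Fin 2) 1)) a) = 0
      exact Ideal.Quotient.eq_zero_iff_mem.mpr (rename_swap_mem k i a ha)) from rfl]
  rw [h2, h3]

lemma swapInv_smul (c : Polynomial k) (m : Mxy k i) :
    swapInv k i (c • m) = c • swapInv k i m := by
  rw [smul_def, smul_def, map_mul]
  congr 1
  calc swapInv k i (Polynomial.aeval (zElt k i) c)
      = Polynomial.aeval (swapInv k i (zElt k i)) c :=
        (Polynomial.aeval_algHom_apply (swapInv k i) (zElt k i) c).symm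
    _ = Polynomial.aeval (zElt k i) c := by rw [swapInv_z]

/-- The symmetric part `M_S` of `M`, as a `k[X]`-submodule. -/
noncomputable def MS : Submodule (Polynomial k) (Mxy k i) where
  carrier := {m | swapInv k i m = m}
  zero_mem' := by simp
  add_mem' := by
    intro a b (ha : swapInv k i a = a) (hb : swapInv k i b = b)
    show swapInv k i (a + b) = a + b
    rw [map_add, ha, hb]
  smul_mem' := by
    intro c m (hm : swapInv k i m = m)
    show swapInv k i (c • m) = c • m
    rw [swapInv_smul, hm]

/-- The antisymmetric part `M_A` of `M`, as a `k[X]`-submodule. -/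
noncomputable def MA : Submodule (Polynomial k) (Mxy k i) where
  carrier := {m | swapInv k i m = -m}
  zero_mem' := by simp
  add_mem' := by
    intro a b (ha : swapInv k i a = -a) (hb : swapInv k i b = -b)
    show swapInv k i (a + b) = -(a + b)
    rw [map_add, ha, hb, neg_add]
  smul_mem' := by
    intro c m (hm : swapInv k i m = -m)
    show swapInv k i (c • m) = -(c • m)
    rw [swapInv_smul, hm, smul_neg]

/-- The cyclic `k[X]`-module `k[X]/(X^(2j-1))`. -/
abbrev cyclic (j : ℕ) : Type _ :=
  Polynomial k ⧸ Ideal.span {(Polynomial.X : Polynomial k) ^ (2 * j - 1)}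

-- PART 1 : monomial basis of Mxy
section Part1

/-- class of `x^a y^c` in `M`, for arbitrary natural exponents. -/
noncomputable def B (a c : ℕ) : Mxy k i :=
  Ideal.Quotient.mk (xyIdeal k i) (X 0 ^ a * X 1 ^ c)

lemma mem_xyIdeal_of_le {a c : ℕ} (h : i ≤ a ∨ i ≤ c) :
    (X 0 ^ a * X 1 ^ c : MvPolynomial (Fin 2) k) ∈ xyIdeal k i := by
  unfold xyIdeal
  rcases h with h | h
  · obtain ⟨d, rfl⟩ : ∃ d, a = i + d := ⟨a - i, by omega⟩
    have he : (X 0 ^ (i + d) * X 1 ^ c : MvPolynomial (Fin 2) k)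
        = X 0 ^ i * (X 0 ^ d * X 1 ^ c) := by
      rw [pow_add]; ring
    rw [he]
    exact Ideal.mul_mem_right _ _ (Ideal.subset_span (Set.mem_insert _ _))
  · obtain ⟨d, rfl⟩ : ∃ d, c = i + d := ⟨c - i, by omega⟩
    have he : (X 0 ^ a * X 1 ^ (i + d) : MvPolynomial (Fin 2) k)
        = X 1 ^ i * (X 0 ^ a * X 1 ^ d) := by
      rw [pow_add]; ring
    rw [he]
    exact Ideal.mul_mem_right _ _ (Ideal.subset_span (Set.mem_insert_of_mem _ rfl))

lemma B_eq_zero {a c : ℕ} (h : i ≤ a ∨ i ≤ c) : B k i a c = 0 :=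
  Ideal.Quotient.eq_zero_iff_mem.mpr (mem_xyIdeal_of_le k i h)

lemma z_mul_B (a c : ℕ) : zElt k i * B k i a c = B k i (a + 1) c + B k i a (c + 1) := by
  unfold zElt B
  rw [← map_mul, ← map_add]
  congr 1
  ring

lemma monomial_eq' (a c : ℕ) :
    (X 0 ^ a * X 1 ^ c : MvPolynomial (Fin 2) k)
      = monomial (Finsupp.single 0 a + Finsupp.single 1 c) 1 := by
  rw [X_pow_eq_monomial, X_pow_eq_monomial, monomial_mul, mul_one]

lemma coeff_xyIdeal {f : MvPolynomial (Fin 2) k} (hf : f ∈ xyIdeal k i)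
    (ν : Fin 2 →₀ ℕ) (h0 : ν 0 < i) (h1 : ν 1 < i) : coeff ν f = 0 := by
  unfold xyIdeal at hf
  obtain ⟨g, h, rfl⟩ := Ideal.mem_span_pair.mp hf
  rw [coeff_add, X_pow_eq_monomial, X_pow_eq_monomial, coeff_mul_monomial',
    coeff_mul_monomial', if_neg, if_neg, add_zero]
  · intro hle
    have := Finsupp.single_le_iff.mp hle
    omega
  · intro hle
    have := Finsupp.single_le_iff.mp hle
    omega

lemma single_add_single_inj {a c a' c' : ℕ}
    (h : Finsupp.single (0 : Fin 2) a + Finsupp.single 1 c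
       = Finsupp.single (0 : Fin 2) a' + Finsupp.single 1 c') : a = a' ∧ c = c' := by
  constructor
  · have := DFunLike.congr_fun h (0 : Fin 2)
    simpa [Finsupp.single_apply] using this
  · have := DFunLike.congr_fun h (1 : Fin 2)
    simpa [Finsupp.single_apply] using this

lemma smul_B (a c : ℕ) (d : k) :
    d • B k i a c = Ideal.Quotient.mk (xyIdeal k i) (C d * (X 0 ^ a * X 1 ^ c)) := by
  rw [map_mul, ← Ideal.Quotient.algebraMap_eq]
  rw [show ((algebraMap (MvPolynomial (Fin 2) k) (Mxy k i)) (C d))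
      = algebraMap k (Mxy k i) d from rfl]
  rw [← Algebra.smul_def]
  rfl

lemma linIndep_bb : LinearIndependent k (fun p : Fin i × Fin i => B k i p.1 p.2) := by
  rw [Fintype.linearIndependent_iff]
  intro g hg p
  set f : MvPolynomial (Fin 2) k
      := ∑ q : Fin i × Fin i, C (g q) * (X 0 ^ (q.1 : ℕ) * X 1 ^ (q.2 : ℕ)) with hfdef
  have hmk : Ideal.Quotient.mk (xyIdeal k i) f = 0 := by
    rw [hfdef, map_sum, ← hg]
    refine Finset.sum_congr rfl fun q _ => ?_
    rw [smul_B]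
  have hf : f ∈ xyIdeal k i := Ideal.Quotient.eq_zero_iff_mem.mp hmk
  have hco := coeff_xyIdeal k i hf
    (Finsupp.single 0 (p.1 : ℕ) + Finsupp.single 1 (p.2 : ℕ))
    (by simp [Finsupp.single_apply])
    (by simp [Finsupp.single_apply])
  rw [hfdef, coeff_sum] at hco
  rw [← hco]
  rw [Finset.sum_eq_single p]
  · rw [monomial_eq', C_mul_monomial, mul_one, coeff_monomial, if_pos rfl]
  · intro q _ hq
    rw [monomial_eq', C_mul_monomial, mul_one, coeff_monomial, if_neg]
    intro hE
    obtain ⟨h1, h2⟩ := single_add_single_inj hE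
    exact hq (Prod.ext (Fin.ext h1) (Fin.ext h2))
  · intro hp
    exact absurd (Finset.mem_univ p) hp

lemma span_bb (hi : 0 < i) :
    ⊤ ≤ Submodule.span k (Set.range fun p : Fin i × Fin i => B k i p.1 p.2) := by
  set W := Submodule.span k (Set.range fun p : Fin i × Fin i => B k i p.1 p.2) with hW
  have hBmem : ∀ a c : ℕ, B k i a c ∈ W := by
    intro a c
    by_cases ha : a < i
    · by_cases hc : c < i
      · exact Submodule.subset_span ⟨(⟨a, ha⟩, ⟨c, hc⟩), rfl⟩
      · rw [B_eq_zero k i (Or.inr (by omega))]; exact W.zero_mem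
    · rw [B_eq_zero k i (Or.inl (by omega))]; exact W.zero_mem
  intro u hu
  clear hu
  obtain ⟨f, rfl⟩ := Ideal.Quotient.mk_surjective u
  induction f using MvPolynomial.induction_on with
  | C a =>
      have : Ideal.Quotient.mk (xyIdeal k i) (C a) = a • B k i 0 0 := by
        rw [smul_B]
        congr 1
        simp
      rw [this]
      exact W.smul_mem _ (hBmem 0 0)
  | add f g hf hg =>
      rw [map_add]
      exact W.add_mem hf hg
  | mul_X f n hf =>
      rw [map_mul]
      have hmul : ∀ u ∈ W, u * Ideal.Quotient.mk (xyIdeal k i) (X n) ∈ W := by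
        intro u hu
        induction hu using Submodule.span_induction with
        | mem x hx =>
            obtain ⟨p, rfl⟩ := hx
            by_cases hn : n = 0
            · subst hn
              have he : (B k i p.1 p.2) * Ideal.Quotient.mk (xyIdeal k i) (X 0)
                  = B k i (p.1 + 1) p.2 := by
                unfold B
                rw [← map_mul]
                congr 1
                ring
              rw [he]
              exact hBmem _ _
            · have hn1 : n = 1 := by
                have hlt := n.isLt
                rw [Fin.ext_iff] at hn ⊢
                simp only [Fin.val_zero, Fin.val_one] at *
                omega
              subst hn1
              have he : (B k i p.1 p.2) * Ideal.Quotient.mk (xyIdeal k i) (X 1)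
                  = B k i p.1 (p.2 + 1) := by
                unfold B
                rw [← map_mul]
                congr 1
                ring
              rw [he]
              exact hBmem _ _
        | zero => rw [zero_mul]; exact W.zero_mem
        | add x y _ _ hx hy => rw [add_mul]; exact W.add_mem hx hy
        | smul c x _ hx => rw [smul_mul_assoc]; exact W.smul_mem c hx
      exact hmul _ hf

/-- the monomial basis of `M`. -/
noncomputable def bB (hi : 0 < i) : Module.Basis (Fin i × Fin i) k (Mxy k i) :=
  Module.Basis.mk (linIndep_bb k i) (span_bb k i hi)

lemma bB_apply (hi : 0 < i) (p : Fin i × Fin i) :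
    bB k i hi p = B k i p.1 p.2 := Module.Basis.mk_apply _ _ _

lemma finrank_Mxy (hi : 0 < i) : Module.finrank k (Mxy k i) = i * i := by
  rw [Module.finrank_eq_card_basis (bB k i hi), Fintype.card_prod, Fintype.card_fin]

end Part1
-- PART 2 : operators e, h, tau
section Part2

/-- weight of the monomial `x^a y^c`, as an element of `k`. -/
noncomputable def wtk (a c : ℕ) : k := ((2 * (i : ℤ) - 2 - 2 * a - 2 * c : ℤ) : k)

/-- the raising operator `e`. -/
noncomputable def eOp (hi : 0 < i) : Mxy k i →ₗ[k] Mxy k i :=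
  (bB k i hi).constr k fun p =>
    (((p.1 : ℕ) * (i - (p.1 : ℕ)) : ℕ) : k) • B k i ((p.1 : ℕ) - 1) (p.2 : ℕ)
      + (((p.2 : ℕ) * (i - (p.2 : ℕ)) : ℕ) : k) • B k i (p.1 : ℕ) ((p.2 : ℕ) - 1)

/-- the grading operator `h`. -/
noncomputable def hOp (hi : 0 < i) : Mxy k i →ₗ[k] Mxy k i :=
  (bB k i hi).constr k fun p => wtk k i (p.1 : ℕ) (p.2 : ℕ) • B k i (p.1 : ℕ) (p.2 : ℕ)

/-- coefficients of the duality operator `tau`. -/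
def lam (a : ℕ) : ℕ := a.factorial * (i - 1).descFactorial a

/-- the duality operator `tau` intertwining multiplication by `z` with `e`. -/
noncomputable def tau (hi : 0 < i) : Mxy k i →ₗ[k] Mxy k i :=
  (bB k i hi).constr k fun p =>
    ((lam i (p.1 : ℕ) * lam i (p.2 : ℕ) : ℕ) : k) • B k i (i - 1 - (p.1 : ℕ)) (i - 1 - (p.2 : ℕ))

/-- inverse of `tau`. -/
noncomputable def tauInv (hi : 0 < i) : Mxy k i →ₗ[k] Mxy k i :=
  (bB k i hi).constr k fun p =>
    (((lam i (i - 1 - (p.1 : ℕ)) * lam i (i - 1 - (p.2 : ℕ)) : ℕ) : k))⁻¹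
      • B k i (i - 1 - (p.1 : ℕ)) (i - 1 - (p.2 : ℕ))

lemma eOp_B (hi : 0 < i) (a c : ℕ) :
    eOp k i hi (B k i a c)
      = ((a * (i - a) : ℕ) : k) • B k i (a - 1) c + ((c * (i - c) : ℕ) : k) • B k i a (c - 1) := by
  by_cases ha : a < i
  · by_cases hc : c < i
    · have hb : B k i a c = bB k i hi (⟨a, ha⟩, ⟨c, hc⟩) := (bB_apply k i hi (⟨a, ha⟩, ⟨c, hc⟩)).symm
      rw [hb]
      exact (bB k i hi).constr_basis k _ _
    · rw [B_eq_zero k i (show i ≤ a ∨ i ≤ c from Or.inr (by omega)), map_zero,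
        B_eq_zero k i (show i ≤ a - 1 ∨ i ≤ c from Or.inr (by omega)), smul_zero, zero_add,
        show i - c = 0 by omega, mul_zero, Nat.cast_zero, zero_smul]
  · rw [B_eq_zero k i (show i ≤ a ∨ i ≤ c from Or.inl (by omega)), map_zero,
      B_eq_zero k i (show i ≤ a ∨ i ≤ c - 1 from Or.inl (by omega)), smul_zero, add_zero,
      show i - a = 0 by omega, mul_zero, Nat.cast_zero, zero_smul]

lemma hOp_B (hi : 0 < i) (a c : ℕ) :
    hOp k i hi (B k i a c) = wtk k i a c • B k i a c := by
  by_cases ha : a < i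
  · by_cases hc : c < i
    · have hb : B k i a c = bB k i hi (⟨a, ha⟩, ⟨c, hc⟩) := (bB_apply k i hi (⟨a, ha⟩, ⟨c, hc⟩)).symm
      conv_lhs => rw [hb]
      exact (bB k i hi).constr_basis k
        (fun p => wtk k i (p.1 : ℕ) (p.2 : ℕ) • B k i (p.1 : ℕ) (p.2 : ℕ)) (⟨a, ha⟩, ⟨c, hc⟩)
    · rw [B_eq_zero k i (show i ≤ a ∨ i ≤ c from Or.inr (by omega)), map_zero, smul_zero]
  · rw [B_eq_zero k i (show i ≤ a ∨ i ≤ c from Or.inl (by omega)), map_zero, smul_zero]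

lemma lam_eq_zero (hi : 0 < i) {a : ℕ} (ha : i ≤ a) : lam i a = 0 := by
  unfold lam
  rw [Nat.descFactorial_eq_zero_iff_lt.mpr (show i - 1 < a by omega), mul_zero]

lemma lam_succ (a : ℕ) : lam i (a + 1) = lam i a * ((i - 1 - a) * (a + 1)) := by
  unfold lam
  rw [Nat.factorial_succ, Nat.descFactorial_succ]
  ring

lemma tau_B (hi : 0 < i) (a c : ℕ) :
    tau k i hi (B k i a c)
      = ((lam i a * lam i c : ℕ) : k) • B k i (i - 1 - a) (i - 1 - c) := by
  by_cases ha : a < i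
  · by_cases hc : c < i
    · have hb : B k i a c = bB k i hi (⟨a, ha⟩, ⟨c, hc⟩) := (bB_apply k i hi (⟨a, ha⟩, ⟨c, hc⟩)).symm
      rw [hb]
      exact (bB k i hi).constr_basis k _ _
    · rw [B_eq_zero k i (show i ≤ a ∨ i ≤ c from Or.inr (by omega)), map_zero,
        lam_eq_zero i hi (by omega : i ≤ c), mul_zero, Nat.cast_zero, zero_smul]
  · rw [B_eq_zero k i (show i ≤ a ∨ i ≤ c from Or.inl (by omega)), map_zero,
      lam_eq_zero i hi (by omega : i ≤ a), zero_mul, Nat.cast_zero, zero_smul]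

lemma smul_pred_succ_left (a c : ℕ) :
    ((a * (i - a) : ℕ) : k) • B k i (a - 1 + 1) c = ((a * (i - a) : ℕ) : k) • B k i a c := by
  cases a with
  | zero => simp
  | succ t => simp

lemma smul_pred_succ_right (a c : ℕ) :
    ((c * (i - c) : ℕ) : k) • B k i a (c - 1 + 1) = ((c * (i - c) : ℕ) : k) • B k i a c := by
  cases c with
  | zero => simp
  | succ t => simp

lemma e_z_comm (hi : 0 < i) (u : Mxy k i) :
    eOp k i hi (zElt k i * u) = zElt k i * eOp k i hi u + hOp k i hi u := by
  have h : (eOp k i hi) ∘ₗ (LinearMap.mulLeft k (zElt k i))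
      = (LinearMap.mulLeft k (zElt k i)) ∘ₗ (eOp k i hi) + hOp k i hi := by
    apply (bB k i hi).ext
    rintro ⟨⟨a, ha⟩, ⟨c, hc⟩⟩
    simp only [LinearMap.coe_comp, Function.comp_apply, LinearMap.add_apply,
      LinearMap.mulLeft_apply, bB_apply]
    rw [z_mul_B, map_add, eOp_B, eOp_B, eOp_B, hOp_B, mul_add, mul_smul_comm, mul_smul_comm,
      z_mul_B, z_mul_B, smul_add, smul_add, smul_pred_succ_left, smul_pred_succ_right]
    have e1 : (((a + 1) * (i - (a + 1)) : ℕ) : k) = ((a : k) + 1) * ((i : k) - (a : k) - 1) := by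
      rw [Nat.cast_mul, Nat.cast_sub (by omega : a + 1 ≤ i)]
      push_cast
      ring
    have e2 : (((c + 1) * (i - (c + 1)) : ℕ) : k) = ((c : k) + 1) * ((i : k) - (c : k) - 1) := by
      rw [Nat.cast_mul, Nat.cast_sub (by omega : c + 1 ≤ i)]
      push_cast
      ring
    have e3 : ((a * (i - a) : ℕ) : k) = (a : k) * ((i : k) - (a : k)) := by
      rw [Nat.cast_mul, Nat.cast_sub (by omega : a ≤ i)]
    have e4 : ((c * (i - c) : ℕ) : k) = (c : k) * ((i : k) - (c : k)) := by
      rw [Nat.cast_mul, Nat.cast_sub (by omega : c ≤ i)]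
    have e5 : wtk k i a c = 2 * (i : k) - 2 - 2 * (a : k) - 2 * (c : k) := by
      unfold wtk
      push_cast
      ring
    rw [e1, e2, e3, e4, e5]
    simp only [Nat.add_sub_cancel]
    module
  exact DFunLike.congr_fun h u

lemma h_z_comm (hi : 0 < i) (u : Mxy k i) :
    hOp k i hi (zElt k i * u) = zElt k i * hOp k i hi u - (2 : k) • (zElt k i * u) := by
  have h : (hOp k i hi) ∘ₗ (LinearMap.mulLeft k (zElt k i))
      = (LinearMap.mulLeft k (zElt k i)) ∘ₗ (hOp k i hi) - (2 : k) • (LinearMap.mulLeft k (zElt k i)) := by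
    apply (bB k i hi).ext
    rintro ⟨⟨a, ha⟩, ⟨c, hc⟩⟩
    simp only [LinearMap.coe_comp, Function.comp_apply, LinearMap.sub_apply,
      LinearMap.smul_apply, LinearMap.mulLeft_apply, bB_apply]
    rw [z_mul_B, map_add, hOp_B, hOp_B, hOp_B, mul_smul_comm, z_mul_B, smul_add]
    have e1 : wtk k i (a + 1) c = wtk k i a c - 2 := by
      unfold wtk
      push_cast
      ring
    have e2 : wtk k i a (c + 1) = wtk k i a c - 2 := by
      unfold wtk
      push_cast
      ring
    rw [e1, e2]
    module
  exact DFunLike.congr_fun h u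

lemma tau_z_comm (hi : 0 < i) (u : Mxy k i) :
    tau k i hi (zElt k i * u) = eOp k i hi (tau k i hi u) := by
  have h : (tau k i hi) ∘ₗ (LinearMap.mulLeft k (zElt k i))
      = (eOp k i hi) ∘ₗ (tau k i hi) := by
    apply (bB k i hi).ext
    rintro ⟨⟨a, ha⟩, ⟨c, hc⟩⟩
    simp only [LinearMap.coe_comp, Function.comp_apply, LinearMap.mulLeft_apply, bB_apply]
    rw [z_mul_B, map_add, tau_B, tau_B, tau_B, map_smul, eOp_B]
    rw [show i - 1 - (a + 1) = i - 1 - a - 1 by omega,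
        show i - 1 - (c + 1) = i - 1 - c - 1 by omega,
        show i - (i - 1 - a) = a + 1 by omega,
        show i - (i - 1 - c) = c + 1 by omega,
        lam_succ, lam_succ]
    push_cast
    module
  exact DFunLike.congr_fun h u

end Part2
-- PART 3 : char-p nonvanishing, tau bijectivity, degree filtration, injectivity of e up high
section Part3

lemma cast_ne_zero_of_lt (p : ℕ) (hp : p.Prime) (hch : CharP k p) {n : ℕ}
    (h0 : 0 < n) (h : n < p) : (n : k) ≠ 0 := by
  haveI := hch
  rw [Ne, CharP.cast_eq_zero_iff k p]
  intro hdvd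
  exact absurd (Nat.le_of_dvd h0 hdvd) (by omega)

lemma factorial_cast_ne_zero (p : ℕ) (hp : p.Prime) (hch : CharP k p) {n : ℕ}
    (h : n < p) : ((n.factorial : ℕ) : k) ≠ 0 := by
  induction n with
  | zero => simp
  | succ t ih =>
      rw [Nat.factorial_succ, Nat.cast_mul]
      exact mul_ne_zero (cast_ne_zero_of_lt k p hp hch (by omega) (by omega)) (ih (by omega))

lemma descFactorial_cast_ne_zero (p : ℕ) (hp : p.Prime) (hch : CharP k p) {n t : ℕ}
    (ht : t ≤ n) (h : n < p) : ((n.descFactorial t : ℕ) : k) ≠ 0 := by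
  induction t with
  | zero => simp
  | succ s ih =>
      rw [Nat.descFactorial_succ, Nat.cast_mul]
      exact mul_ne_zero (cast_ne_zero_of_lt k p hp hch (by omega) (by omega)) (ih (by omega))

lemma lam_cast_ne_zero (p : ℕ) (hp : p.Prime) (hch : CharP k p) (hip : 2 * i ≤ p)
    {a : ℕ} (ha : a < i) : ((lam i a : ℕ) : k) ≠ 0 := by
  unfold lam
  rw [Nat.cast_mul]
  exact mul_ne_zero (factorial_cast_ne_zero k p hp hch (by omega))
    (descFactorial_cast_ne_zero k p hp hch (by omega) (by omega))

lemma tauInv_B (hi : 0 < i) {a c : ℕ} (ha : a < i) (hc : c < i) :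
    tauInv k i hi (B k i a c)
      = (((lam i (i - 1 - a) * lam i (i - 1 - c) : ℕ) : k))⁻¹
          • B k i (i - 1 - a) (i - 1 - c) := by
  have hb : B k i a c = bB k i hi (⟨a, ha⟩, ⟨c, hc⟩) := (bB_apply k i hi (⟨a, ha⟩, ⟨c, hc⟩)).symm
  conv_lhs => rw [hb]
  exact (bB k i hi).constr_basis k
    (fun p => (((lam i (i - 1 - (p.1 : ℕ)) * lam i (i - 1 - (p.2 : ℕ)) : ℕ) : k))⁻¹
      • B k i (i - 1 - (p.1 : ℕ)) (i - 1 - (p.2 : ℕ))) (⟨a, ha⟩, ⟨c, hc⟩)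

lemma tauInv_tau (hi : 0 < i) (p : ℕ) (hp : p.Prime) (hch : CharP k p) (hip : 2 * i ≤ p)
    (u : Mxy k i) : tauInv k i hi (tau k i hi u) = u := by
  have h : (tauInv k i hi) ∘ₗ (tau k i hi) = LinearMap.id := by
    apply (bB k i hi).ext
    rintro ⟨⟨a, ha⟩, ⟨c, hc⟩⟩
    simp only [LinearMap.coe_comp, Function.comp_apply, LinearMap.id_apply, bB_apply]
    rw [tau_B, map_smul, tauInv_B k i hi (by omega) (by omega),
      show i - 1 - (i - 1 - a) = a by omega, show i - 1 - (i - 1 - c) = c by omega,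
      smul_smul, mul_inv_cancel₀, one_smul]
    rw [Nat.cast_mul]
    exact mul_ne_zero (lam_cast_ne_zero k i p hp hch hip ha) (lam_cast_ne_zero k i p hp hch hip hc)
  exact DFunLike.congr_fun h u

lemma tau_inj (hi : 0 < i) (p : ℕ) (hp : p.Prime) (hch : CharP k p) (hip : 2 * i ≤ p) :
    Function.Injective (tau k i hi) := by
  intro u v huv
  rw [← tauInv_tau k i hi p hp hch hip u, huv, tauInv_tau k i hi p hp hch hip v]

/-- span of the monomials of total degree `d`. -/
noncomputable def Dspan (d : ℕ) : Submodule k (Mxy k i) :=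
  Submodule.span k {u | ∃ a c : ℕ, a + c = d ∧ u = B k i a c}

/-- span of the monomials of total degree at least `i`. -/
noncomputable def Uspan : Submodule k (Mxy k i) :=
  Submodule.span k {u | ∃ a c : ℕ, a < i ∧ c < i ∧ i ≤ a + c ∧ u = B k i a c}

/-- span of the monomials of total degree at most `i - 2`. -/
noncomputable def Lspan : Submodule k (Mxy k i) :=
  Submodule.span k {u | ∃ a c : ℕ, a + c + 2 ≤ i ∧ u = B k i a c}

lemma z_mul_mem_Dspan {d : ℕ} {u : Mxy k i} (hu : u ∈ Dspan k i d) :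
    zElt k i * u ∈ Dspan k i (d + 1) := by
  induction hu using Submodule.span_induction with
  | mem x hx =>
      obtain ⟨a, c, hac, rfl⟩ := hx
      rw [z_mul_B]
      exact add_mem (Submodule.subset_span ⟨a + 1, c, by omega, rfl⟩)
        (Submodule.subset_span ⟨a, c + 1, by omega, rfl⟩)
  | zero => rw [mul_zero]; exact zero_mem _
  | add x y _ _ hx hy => rw [mul_add]; exact add_mem hx hy
  | smul t x _ hx => rw [mul_smul_comm]; exact Submodule.smul_mem _ t hx

lemma zpow_mul_mem_Dspan {d : ℕ} (s : ℕ) {u : Mxy k i} (hu : u ∈ Dspan k i d) :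
    zElt k i ^ s * u ∈ Dspan k i (d + s) := by
  induction s with
  | zero => rw [pow_zero, one_mul]; exact hu
  | succ t ih =>
      rw [pow_succ', mul_assoc]
      exact z_mul_mem_Dspan k i ih

lemma Dspan_le_Uspan {d : ℕ} (hd : i ≤ d) : Dspan k i d ≤ Uspan k i := by
  rw [Dspan, Submodule.span_le]
  rintro u ⟨a, c, hac, rfl⟩
  by_cases ha : a < i
  · by_cases hc : c < i
    · exact Submodule.subset_span ⟨a, c, ha, hc, by omega, rfl⟩
    · rw [B_eq_zero k i (Or.inr (by omega))]; exact zero_mem _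
  · rw [B_eq_zero k i (Or.inl (by omega))]; exact zero_mem _

end Part3
-- PART 3b : injectivity of multiplication by z on Lspan, of e on Uspan
section Part3b

lemma low_coeff {f : MvPolynomial (Fin 2) k}
    (hf : f ∈ Submodule.span k {f : MvPolynomial (Fin 2) k |
      ∃ a c : ℕ, a + c + 2 ≤ i ∧ f = X 0 ^ a * X 1 ^ c})
    (ν : Fin 2 →₀ ℕ) (hν : i < ν 0 + ν 1 + 2) : coeff ν f = 0 := by
  induction hf using Submodule.span_induction with
  | mem x hx =>
      obtain ⟨a, c, hac, rfl⟩ := hx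
      rw [monomial_eq', coeff_monomial, if_neg]
      intro hE
      rw [← hE] at hν
      simp only [Finsupp.add_apply, Finsupp.single_apply] at hν
      norm_num at hν
      omega
  | zero => rw [coeff_zero]
  | add x y _ _ hx hy => rw [coeff_add, hx, hy, add_zero]
  | smul t x _ hx => rw [coeff_smul, hx, smul_zero]

lemma Lspan_z_inj {u : Mxy k i} (hu : u ∈ Lspan k i) (hz : zElt k i * u = 0) : u = 0 := by
  set S : Set (MvPolynomial (Fin 2) k)
    := {f : MvPolynomial (Fin 2) k | ∃ a c : ℕ, a + c + 2 ≤ i ∧ f = X 0 ^ a * X 1 ^ c} with hS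
  have hset : {u : Mxy k i | ∃ a c : ℕ, a + c + 2 ≤ i ∧ u = B k i a c}
      = (Ideal.Quotient.mkₐ k (xyIdeal k i)).toLinearMap '' S := by
    ext w
    constructor
    · rintro ⟨a, c, hac, rfl⟩
      exact ⟨X 0 ^ a * X 1 ^ c, ⟨a, c, hac, rfl⟩, rfl⟩
    · rintro ⟨f, ⟨a, c, hac, rfl⟩, rfl⟩
      exact ⟨a, c, hac, rfl⟩
  rw [Lspan, hset, ← Submodule.map_span] at hu
  obtain ⟨f, hfspan, rfl⟩ := hu
  have hzf : zElt k i * (Ideal.Quotient.mkₐ k (xyIdeal k i)).toLinearMap f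
      = Ideal.Quotient.mk (xyIdeal k i) ((X 0 + X 1) * f) := by
    rw [map_mul]
    rfl
  rw [hzf] at hz
  have hmem : (X 0 + X 1) * f ∈ xyIdeal k i := Ideal.Quotient.eq_zero_iff_mem.mp hz
  have hzero : (X 0 + X 1) * f = 0 := by
    apply MvPolynomial.ext
    intro ν
    rw [coeff_zero]
    by_cases hν : ν 0 < i ∧ ν 1 < i
    · exact coeff_xyIdeal k i hmem ν hν.1 hν.2
    · rw [add_mul, coeff_add, coeff_X_mul', coeff_X_mul']
      have h01 : i ≤ ν 0 + ν 1 := by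
        rcases not_and_or.mp hν with h | h <;> omega
      have t1 : (if (0 : Fin 2) ∈ ν.support then coeff (ν - Finsupp.single 0 1) f else 0) = 0 := by
        split_ifs with h
        · apply low_coeff k i hfspan
          have hh := Finsupp.mem_support_iff.mp h
          simp only [Finsupp.tsub_apply, Finsupp.single_apply]
          norm_num
          omega
        · rfl
      have t2 : (if (1 : Fin 2) ∈ ν.support then coeff (ν - Finsupp.single 1 1) f else 0) = 0 := by
        split_ifs with h
        · apply low_coeff k i hfspan
          have hh := Finsupp.mem_support_iff.mp h
          simp only [Finsupp.tsub_apply, Finsupp.single_apply]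
          norm_num
          omega
        · rfl
      rw [t1, t2, add_zero]
  have hf0 : f = 0 := by
    rcases mul_eq_zero.mp hzero with h | h
    · exfalso
      have := congrArg (coeff (Finsupp.single 0 1)) h
      simp [coeff_X', Finsupp.single_eq_single_iff] at this
    · exact h
  rw [hf0, map_zero]

end Part3b
-- PART 3c : Uspan as image of Lspan under tau; injectivity of e on Uspan
section Part3c

lemma map_tau_Lspan (hi : 0 < i) (p : ℕ) (hp : p.Prime) (hch : CharP k p) (hip : 2 * i ≤ p) :
    Submodule.map (tau k i hi) (Lspan k i) = Uspan k i := by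
  apply le_antisymm
  · rw [Lspan, Submodule.map_span, Submodule.span_le]
    rintro w ⟨u, ⟨a, c, hac, rfl⟩, rfl⟩
    rw [tau_B]
    refine Submodule.smul_mem _ _ (Submodule.subset_span ⟨i - 1 - a, i - 1 - c, by omega, by omega,
      by omega, rfl⟩)
  · rw [Uspan, Submodule.span_le]
    rintro w ⟨a, c, ha, hc, hac, rfl⟩
    have hNne : ((lam i (i - 1 - a) * lam i (i - 1 - c) : ℕ) : k) ≠ 0 := by
      rw [Nat.cast_mul]
      exact mul_ne_zero (lam_cast_ne_zero k i p hp hch hip (by omega))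
        (lam_cast_ne_zero k i p hp hch hip (by omega))
    refine ⟨((lam i (i - 1 - a) * lam i (i - 1 - c) : ℕ) : k)⁻¹ • B k i (i - 1 - a) (i - 1 - c),
      Submodule.smul_mem _ _ (Submodule.subset_span ⟨i - 1 - a, i - 1 - c, by omega, rfl⟩), ?_⟩
    rw [map_smul, tau_B, show i - 1 - (i - 1 - a) = a by omega, show i - 1 - (i - 1 - c) = c by omega,
      smul_smul, inv_mul_cancel₀ hNne, one_smul]

lemma e_inj_on_Uspan (hi : 0 < i) (p : ℕ) (hp : p.Prime) (hch : CharP k p) (hip : 2 * i ≤ p)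
    {u : Mxy k i} (hu : u ∈ Uspan k i) (he : eOp k i hi u = 0) : u = 0 := by
  rw [← map_tau_Lspan k i hi p hp hch hip] at hu
  obtain ⟨w, hw, rfl⟩ := hu
  rw [← tau_z_comm] at he
  have hzw : zElt k i * w = 0 := tau_inj k i hi p hp hch hip (by rw [he, map_zero])
  rw [Lspan_z_inj k i hw hzw, map_zero]

end Part3c
-- PART 4 : the primitive vectors v_l and their chains
section Part4

/-- coefficients of the primitive vectors. -/
noncomputable def cc (l a : ℕ) : k :=
  (-1 : k) ^ a * (((i - l).choose a * ((l - 1 + a).factorial * (i - 1 - a).factorial) : ℕ) : k)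

/-- the primitive vector generating the Jordan block of size `2l-1`. -/
noncomputable def v (l : ℕ) : Mxy k i :=
  ∑ a ∈ Finset.range (i - l + 1), cc k i l a • B k i a (i - l - a)

/-- eigenvalue scalars for `e` on chains. -/
noncomputable def Ek (l s : ℕ) : k := (s : k) * (2 * (l : k) - (s : k) - 1)

/-- eigenvalue scalars for `h` on chains. -/
noncomputable def Wk (l s : ℕ) : k := 2 * (l : k) - 2 - 2 * (s : k)

lemma cc_step (l a : ℕ) (hl : 1 ≤ l) (ha : a < i - l) :
    ((i - l).choose (a + 1) * ((l - 1 + (a + 1)).factorial * (i - 1 - (a + 1)).factorial))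
        * ((a + 1) * (i - 1 - a))
      = ((i - l).choose a * ((l - 1 + a).factorial * (i - 1 - a).factorial))
        * ((i - l - a) * (l + a)) := by
  have h1 : (i - l).choose (a + 1) * (a + 1) = (i - l).choose a * (i - l - a) :=
    Nat.choose_succ_right_eq _ _
  rw [show l - 1 + (a + 1) = (l - 1 + a) + 1 by omega, Nat.factorial_succ,
      show i - 1 - (a + 1) = i - 2 - a by omega,
      show i - 1 - a = (i - 2 - a) + 1 by omega, Nat.factorial_succ,
      show l - 1 + a + 1 = l + a by omega]
  calc (i - l).choose (a + 1) * ((l + a) * (l - 1 + a).factorial * (i - 2 - a).factorial)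
        * ((a + 1) * (i - 2 - a + 1))
      = ((i - l).choose (a + 1) * (a + 1))
          * ((l + a) * ((l - 1 + a).factorial * (i - 2 - a + 1) * (i - 2 - a).factorial)) := by
        ring
    _ = ((i - l).choose a * (i - l - a))
          * ((l + a) * ((l - 1 + a).factorial * (i - 2 - a + 1) * (i - 2 - a).factorial)) := by
        rw [h1]
    _ = (i - l).choose a * ((l - 1 + a).factorial * ((i - 2 - a + 1) * (i - 2 - a).factorial))
          * ((i - l - a) * (l + a)) := by
        ring

lemma cc_rec (l a : ℕ) (hl : 1 ≤ l) (ha : a < i - l) :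
    cc k i l (a + 1) * (((a + 1) * (i - 1 - a) : ℕ) : k)
      + cc k i l a * (((i - l - a) * (l + a) : ℕ) : k) = 0 := by
  have hcast : (((i - l).choose (a + 1) * ((l - 1 + (a + 1)).factorial
          * (i - 1 - (a + 1)).factorial) : ℕ) : k) * (((a + 1) * (i - 1 - a) : ℕ) : k)
      = (((i - l).choose a * ((l - 1 + a).factorial * (i - 1 - a).factorial) : ℕ) : k)
          * (((i - l - a) * (l + a) : ℕ) : k) := by
    rw [← Nat.cast_mul, ← Nat.cast_mul, cc_step i l a hl ha]
  unfold cc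
  rw [pow_succ]
  linear_combination (-((-1 : k) ^ a)) * hcast

lemma e_v (hi : 0 < i) (l : ℕ) (hl : 1 ≤ l) (hli : l ≤ i) :
    eOp k i hi (v k i l) = 0 := by
  unfold v
  rw [map_sum]
  have hterm : ∀ a ∈ Finset.range (i - l + 1),
      eOp k i hi (cc k i l a • B k i a (i - l - a))
        = (cc k i l a * ((a * (i - a) : ℕ) : k)) • B k i (a - 1) (i - l - a)
          + (cc k i l a * (((i - l - a) * (i - (i - l - a)) : ℕ) : k)) • B k i a (i - l - a - 1) := by
    intro a _
    rw [map_smul, eOp_B, smul_add, smul_smul, smul_smul]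
  rw [Finset.sum_congr rfl hterm, Finset.sum_add_distrib]
  have h1 : ∑ a ∈ Finset.range (i - l + 1),
        (cc k i l a * ((a * (i - a) : ℕ) : k)) • B k i (a - 1) (i - l - a)
      = ∑ a ∈ Finset.range (i - l),
        (cc k i l (a + 1) * (((a + 1) * (i - (a + 1)) : ℕ) : k)) • B k i a (i - l - (a + 1)) := by
    rw [Finset.sum_range_succ']
    simp
  have h2 : ∑ a ∈ Finset.range (i - l + 1),
        (cc k i l a * (((i - l - a) * (i - (i - l - a)) : ℕ) : k)) • B k i a (i - l - a - 1)
      = ∑ a ∈ Finset.range (i - l),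
        (cc k i l a * (((i - l - a) * (i - (i - l - a)) : ℕ) : k)) • B k i a (i - l - a - 1) := by
    rw [Finset.sum_range_succ]
    simp
  rw [h1, h2, ← Finset.sum_add_distrib]
  apply Finset.sum_eq_zero
  intro a ha
  rw [Finset.mem_range] at ha
  rw [show i - l - (a + 1) = i - l - a - 1 by omega, ← add_smul,
      show i - (a + 1) = i - 1 - a by omega, show i - (i - l - a) = l + a by omega,
      cc_rec k i l a hl ha, zero_smul]

lemma wtk_v (l a : ℕ) (hl : 1 ≤ l) (hli : l ≤ i) (ha : a ≤ i - l) :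
    wtk k i a (i - l - a) = Wk k l 0 := by
  unfold wtk Wk
  rw [show ((i - l - a : ℕ) : ℤ) = (i : ℤ) - l - a by omega]
  push_cast
  ring

lemma hOp_v (hi : 0 < i) (l : ℕ) (hl : 1 ≤ l) (hli : l ≤ i) :
    hOp k i hi (v k i l) = Wk k l 0 • v k i l := by
  unfold v
  rw [map_sum, Finset.smul_sum]
  refine Finset.sum_congr rfl fun a ha => ?_
  rw [Finset.mem_range] at ha
  rw [map_smul, hOp_B, wtk_v k i l a hl hli (by omega), smul_smul, smul_smul, mul_comm]

lemma chain (hi : 0 < i) (l : ℕ) (hl : 1 ≤ l) (hli : l ≤ i) (s : ℕ) :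
    hOp k i hi (zElt k i ^ s * v k i l) = Wk k l s • (zElt k i ^ s * v k i l)
    ∧ eOp k i hi (zElt k i ^ s * v k i l)
        = Ek k l s • (zElt k i ^ (s - 1) * v k i l) := by
  induction s with
  | zero =>
      rw [pow_zero, one_mul]
      refine ⟨hOp_v k i hi l hl hli, ?_⟩
      rw [e_v k i hi l hl hli, show Ek k l 0 = 0 by unfold Ek; push_cast; ring, zero_smul]
  | succ t ih =>
      have hz : zElt k i ^ (t + 1) * v k i l = zElt k i * (zElt k i ^ t * v k i l) := by
        rw [pow_succ', mul_assoc]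
      constructor
      · rw [hz, h_z_comm, ih.1, mul_smul_comm, ← hz, ← sub_smul,
          show Wk k l t - 2 = Wk k l (t + 1) by unfold Wk; push_cast; ring]
      · rw [hz, e_z_comm, ih.2, ih.1, mul_smul_comm]
        cases t with
        | zero =>
            rw [show Ek k l 0 = 0 by unfold Ek; push_cast; ring, zero_smul, zero_add,
              show Wk k l 0 = Ek k l 1 by unfold Wk Ek; push_cast; ring]
        | succ r =>
            rw [show r + 1 - 1 = r from rfl, ← mul_assoc, ← pow_succ', ← add_smul,
              show Ek k l (r + 1) + Wk k l (r + 1) = Ek k l (r + 1 + 1) by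
                unfold Wk Ek; push_cast; ring,
              show r + 1 + 1 - 1 = r + 1 from rfl]

lemma v_mem_Dspan (l : ℕ) : v k i l ∈ Dspan k i (i - l) := by
  unfold v
  refine Submodule.sum_mem _ fun a ha => Submodule.smul_mem _ _ ?_
  rw [Finset.mem_range] at ha
  exact Submodule.subset_span ⟨a, i - l - a, by omega, rfl⟩

lemma z_pow_v_eq_zero (hi : 0 < i) (p : ℕ) (hp : p.Prime) (hch : CharP k p) (hip : 2 * i ≤ p)
    (l : ℕ) (hl : 1 ≤ l) (hli : l ≤ i) :
    zElt k i ^ (2 * l - 1) * v k i l = 0 := by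
  have he := (chain k i hi l hl hli (2 * l - 1)).2
  rw [show Ek k l (2 * l - 1) = 0 by
      unfold Ek
      rw [Nat.cast_sub (by omega : 1 ≤ 2 * l)]
      push_cast
      ring, zero_smul] at he
  have hU : zElt k i ^ (2 * l - 1) * v k i l ∈ Uspan k i := by
    refine Dspan_le_Uspan k i (show i ≤ i - l + (2 * l - 1) by omega) ?_
    exact zpow_mul_mem_Dspan k i _ (v_mem_Dspan k i l)
  exact e_inj_on_Uspan k i hi p hp hch hip hU he

lemma swapInv_mk (f : MvPolynomial (Fin 2) k) :
    swapInv k i (Ideal.Quotient.mk (xyIdeal k i) f)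
      = Ideal.Quotient.mk (xyIdeal k i) (rename (Equiv.swap (0 : Fin 2) 1) f) := by
  unfold swapInv
  rw [Ideal.Quotient.liftₐ_apply]
  rfl

lemma swap_B (a c : ℕ) : swapInv k i (B k i a c) = B k i c a := by
  unfold B
  rw [swapInv_mk, map_mul, map_pow, map_pow, rename_X, rename_X, Equiv.swap_apply_left,
    Equiv.swap_apply_right]
  congr 1
  ring

lemma neg_one_pow_sub (m a : ℕ) (ha : a ≤ m) :
    ((-1 : k)) ^ (m - a) = (-1 : k) ^ m * (-1 : k) ^ a := by
  have h1 : ((-1 : k)) ^ a * (-1 : k) ^ a = 1 := by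
    rw [← pow_add]
    exact Even.neg_one_pow ⟨a, by ring⟩
  calc ((-1 : k)) ^ (m - a) = (-1 : k) ^ (m - a) * ((-1 : k) ^ a * (-1 : k) ^ a) := by
        rw [h1, mul_one]
    _ = ((-1 : k) ^ (m - a) * (-1 : k) ^ a) * (-1 : k) ^ a := by ring
    _ = (-1 : k) ^ m * (-1 : k) ^ a := by rw [← pow_add, show m - a + a = m by omega]

lemma cc_reflect (l a : ℕ) (hl : 1 ≤ l) (hli : l ≤ i) (ha : a ≤ i - l) :
    cc k i l (i - l - a) = (-1 : k) ^ (i - l) * cc k i l a := by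
  unfold cc
  rw [Nat.choose_symm ha, show l - 1 + (i - l - a) = i - 1 - a by omega,
    show i - 1 - (i - l - a) = l - 1 + a by omega, neg_one_pow_sub k (i - l) a ha]
  push_cast
  ring

lemma swap_v (l : ℕ) (hl : 1 ≤ l) (hli : l ≤ i) :
    swapInv k i (v k i l) = ((-1 : k) ^ (i - l)) • v k i l := by
  unfold v
  rw [map_sum, Finset.sum_congr rfl (fun a _ => by rw [map_smul, swap_B]), Finset.smul_sum]
  rw [← Finset.sum_range_reflect]
  refine Finset.sum_congr rfl fun a ha => ?_
  rw [Finset.mem_range] at ha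
  rw [show i - l + 1 - 1 - a = i - l - a by omega, show i - l - (i - l - a) = a by omega,
    cc_reflect k i l a hl hli (by omega), smul_smul]

end Part4
-- PART 5 : iterated e on chains, key independence lemma
section Part5

/-- product of eigenvalues picked up by applying `e^s` to `z^s v_l`. -/
noncomputable def Gam (l s : ℕ) : k := ∏ t ∈ Finset.range s, Ek k l (t + 1)

lemma ePow_eq (hi : 0 < i) (l : ℕ) (hl : 1 ≤ l) (hli : l ≤ i) (s : ℕ) :
    ((eOp k i hi) ^ s) (zElt k i ^ s * v k i l) = Gam k l s • v k i l := by
  induction s with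
  | zero =>
      rw [pow_zero, pow_zero, one_mul, Module.End.one_apply,
        show Gam k l 0 = 1 from Finset.prod_range_zero _, one_smul]
  | succ t ih =>
      rw [pow_succ, Module.End.mul_apply, (chain k i hi l hl hli (t + 1)).2,
        show t + 1 - 1 = t from rfl, map_smul, ih, smul_smul,
        show Gam k l (t + 1) = Gam k l t * Ek k l (t + 1) from Finset.prod_range_succ _ _]
      rw [mul_comm]

lemma ePow_lt (hi : 0 < i) (l : ℕ) (hl : 1 ≤ l) (hli : l ≤ i) {r s : ℕ} (h : s < r) :
    ((eOp k i hi) ^ r) (zElt k i ^ s * v k i l) = 0 := by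
  obtain ⟨d, rfl⟩ : ∃ d, r = d + 1 + s := ⟨r - s - 1, by omega⟩
  rw [pow_add, Module.End.mul_apply, ePow_eq k i hi l hl hli s, map_smul, pow_succ,
    Module.End.mul_apply, e_v k i hi l hl hli, map_zero, smul_zero]

lemma Ek_cast (l t : ℕ) (ht : t + 2 ≤ 2 * l) :
    Ek k l (t + 1) = ((t + 1 : ℕ) : k) * ((2 * l - t - 2 : ℕ) : k) := by
  unfold Ek
  rw [Nat.cast_sub (by omega : 2 ≤ 2 * l - t), Nat.cast_sub (by omega : t ≤ 2 * l)]
  push_cast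
  ring

lemma Gam_ne_zero (p : ℕ) (hp : p.Prime) (hch : CharP k p) (hip : 2 * i ≤ p)
    (l : ℕ) (hl : 1 ≤ l) (hli : l ≤ i) {s : ℕ} (hs : s ≤ 2 * l - 2) : Gam k l s ≠ 0 := by
  unfold Gam
  rw [Finset.prod_ne_zero_iff]
  intro t ht
  rw [Finset.mem_range] at ht
  rw [Ek_cast k l t (by omega)]
  exact mul_ne_zero (cast_ne_zero_of_lt k p hp hch (by omega) (by omega))
    (cast_ne_zero_of_lt k p hp hch (by omega) (by omega))

lemma cc0_ne_zero (p : ℕ) (hp : p.Prime) (hch : CharP k p) (hip : 2 * i ≤ p)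
    (l : ℕ) (hl : 1 ≤ l) (hli : l ≤ i) : cc k i l 0 ≠ 0 := by
  unfold cc
  rw [pow_zero, one_mul, Nat.choose_zero_right, one_mul, Nat.add_zero, Nat.sub_zero, Nat.cast_mul]
  exact mul_ne_zero (factorial_cast_ne_zero k p hp hch (by omega))
    (factorial_cast_ne_zero k p hp hch (by omega))

lemma coord_B (hi : 0 < i) (p0 : Fin i × Fin i) {a c : ℕ} (ha : a < i) (hc : c < i) :
    (bB k i hi).coord p0 (B k i a c)
      = if ((⟨a, ha⟩ : Fin i), (⟨c, hc⟩ : Fin i)) = p0 then 1 else 0 := by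
  rw [show B k i a c = bB k i hi (⟨a, ha⟩, ⟨c, hc⟩)
      from (bB_apply k i hi (⟨a, ha⟩, ⟨c, hc⟩)).symm,
    Module.Basis.coord_apply, Module.Basis.repr_self, Finsupp.single_apply]

lemma coord_v (hi : 0 < i) (l l0 : ℕ) (hl : 1 ≤ l) (hli : l ≤ i) (hl0 : 1 ≤ l0) (hli0 : l0 ≤ i) :
    (bB k i hi).coord (⟨0, hi⟩, ⟨i - l0, by omega⟩) (v k i l)
      = if l = l0 then cc k i l 0 else 0 := by
  unfold v
  rw [map_sum]
  have hterm : ∀ a ∈ Finset.range (i - l + 1),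
      (bB k i hi).coord (⟨0, hi⟩, ⟨i - l0, by omega⟩) (cc k i l a • B k i a (i - l - a))
        = cc k i l a * (if a = 0 ∧ l = l0 then 1 else 0) := by
    intro a ha
    rw [Finset.mem_range] at ha
    rw [map_smul, smul_eq_mul, coord_B k i hi _ (by omega) (by omega)]
    congr 1
    by_cases hcond : a = 0 ∧ l = l0
    · rw [if_pos hcond, if_pos]
      obtain ⟨rfl, rfl⟩ := hcond
      rw [Prod.ext_iff, Fin.ext_iff, Fin.ext_iff]
      constructor <;> simp
    · rw [if_neg hcond, if_neg]
      intro hE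
      rw [Prod.ext_iff, Fin.ext_iff, Fin.ext_iff] at hE
      simp only [] at hE
      exact hcond ⟨by omega, by omega⟩
  rw [Finset.sum_congr rfl hterm]
  by_cases hll : l = l0
  · subst hll
    rw [if_pos (rfl : l = l)]
    rw [Finset.sum_eq_single 0]
    · rw [if_pos ⟨rfl, rfl⟩, mul_one]
    · intro a _ ha0
      rw [if_neg (fun h => ha0 h.1), mul_zero]
    · intro h0
      exact absurd (Finset.mem_range.mpr (by omega)) h0
  · rw [if_neg hll]
    apply Finset.sum_eq_zero
    intro a _
    rw [if_neg (fun h => hll h.2), mul_zero]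

lemma key (hi : 0 < i) (p : ℕ) (hp : p.Prime) (hch : CharP k p) (hip : 2 * i ≤ p)
    (g : ℕ → ℕ → k)
    (hrel : ∑ l ∈ Finset.Icc 1 i, ∑ r ∈ Finset.range (2 * l - 1),
      g l r • (zElt k i ^ r * v k i l) = 0) :
    ∀ l r, 1 ≤ l → l ≤ i → r ≤ 2 * l - 2 → g l r = 0 := by
  have main : ∀ d : ℕ, ∀ l0 r0, 1 ≤ l0 → l0 ≤ i → r0 ≤ 2 * l0 - 2 → 2 * i - 2 - r0 ≤ d →
      g l0 r0 = 0 := by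
    intro d
    induction d using Nat.strong_induction_on with
    | _ d IH =>
      intro l0 r0 hl0 hli0 hr0 hd
      set φ : Mxy k i →ₗ[k] k
        := ((bB k i hi).coord (⟨0, hi⟩, ⟨i - l0, by omega⟩)).comp ((eOp k i hi) ^ r0) with hφ
      have h0 : φ (∑ l ∈ Finset.Icc 1 i, ∑ r ∈ Finset.range (2 * l - 1),
          g l r • (zElt k i ^ r * v k i l)) = 0 := by
        rw [hrel, map_zero]
      simp only [map_sum, map_smul, smul_eq_mul] at h0
      have hval : ∀ l ∈ Finset.Icc 1 i, ∀ r ∈ Finset.range (2 * l - 1),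
          g l r * φ (zElt k i ^ r * v k i l)
            = if l = l0 ∧ r = r0 then g l0 r0 * (Gam k l0 r0 * cc k i l0 0) else 0 := by
        intro l hlmem r hrmem
        rw [Finset.mem_Icc] at hlmem
        rw [Finset.mem_range] at hrmem
        rcases lt_trichotomy r r0 with hlt | rfl | hgt
        · rw [if_neg (fun h : l = l0 ∧ r = r0 => by omega), hφ, LinearMap.comp_apply,
            ePow_lt k i hi l hlmem.1 hlmem.2 hlt, map_zero, mul_zero]
        · rw [hφ, LinearMap.comp_apply, ePow_eq k i hi l hlmem.1 hlmem.2, map_smul, smul_eq_mul,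
            coord_v k i hi l l0 hlmem.1 hlmem.2 hl0 hli0]
          by_cases hll : l = l0
          · subst hll
            rw [if_pos (⟨rfl, rfl⟩ : l = l ∧ r = r), if_pos (rfl : l = l)]
          · rw [if_neg (fun h : l = l0 ∧ r = r => hll h.1), if_neg hll, mul_zero, mul_zero]
        · have hg0 : g l r = 0 := by
            refine IH (2 * i - 2 - r) (by omega) l r hlmem.1 hlmem.2 (by omega) le_rfl
          rw [if_neg (fun h : l = l0 ∧ r = r0 => by omega), hg0, zero_mul]
      rw [Finset.sum_congr rfl (fun l hl => Finset.sum_congr rfl (fun r hr => hval l hl r hr))]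
        at h0
      rw [Finset.sum_eq_single l0] at h0
      · rw [Finset.sum_eq_single r0] at h0
        · rw [if_pos (⟨rfl, rfl⟩ : l0 = l0 ∧ r0 = r0)] at h0
          rcases mul_eq_zero.mp h0 with h | h
          · exact h
          · exact absurd h (mul_ne_zero (Gam_ne_zero k i p hp hch hip l0 hl0 hli0 hr0)
              (cc0_ne_zero k i p hp hch hip l0 hl0 hli0))
        · intro r _ hrne
          rw [if_neg (fun h : l0 = l0 ∧ r = r0 => hrne h.2)]
        · intro hr0mem
          exact absurd (Finset.mem_range.mpr (by omega)) hr0mem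
      · intro l _ hlne
        apply Finset.sum_eq_zero
        intro r _
        rw [if_neg (fun h : l = l0 ∧ r = r0 => hlne h.1)]
      · intro hl0mem
        exact absurd (Finset.mem_Icc.mpr ⟨hl0, hli0⟩) hl0mem
  intro l r hl hli hr
  exact main (2 * i - 2 - r) l r hl hli hr le_rfl

end Part5
-- PART 6 : the chain family as a basis
section Part6

lemma sum_odds (n : ℕ) : ∑ l ∈ Finset.range n, (2 * l + 1) = n * n := by
  induction n with
  | zero => simp
  | succ t ih => rw [Finset.sum_range_succ, ih]; ring

/-- the chain family, indexed by pairs (block, position). -/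
noncomputable def wfam (j : (l : Fin i) × Fin (2 * (l : ℕ) + 1)) : Mxy k i :=
  zElt k i ^ (j.2 : ℕ) * v k i ((j.1 : ℕ) + 1)

lemma wfam_indep (hi : 0 < i) (p : ℕ) (hp : p.Prime) (hch : CharP k p) (hip : 2 * i ≤ p) :
    LinearIndependent k (wfam k i) := by
  rw [Fintype.linearIndependent_iff]
  intro g' hg' j
  set G : ℕ → ℕ → k := fun l r =>
    if h : l < i ∧ r < 2 * l + 1 then g' ⟨⟨l, h.1⟩, ⟨r, h.2⟩⟩ else 0 with hG
  have hsig : ∑ j : (l : Fin i) × Fin (2 * (l : ℕ) + 1), g' j • wfam k i j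
      = ∑ l ∈ Finset.range i, ∑ r ∈ Finset.range (2 * l + 1),
          G l r • (zElt k i ^ r * v k i (l + 1)) := by
    rw [← Finset.univ_sigma_univ, Finset.sum_sigma]
    rw [← Fin.sum_univ_eq_sum_range (fun l => ∑ r ∈ Finset.range (2 * l + 1),
      G l r • (zElt k i ^ r * v k i (l + 1))) i]
    refine Finset.sum_congr rfl fun l _ => ?_
    rw [← Fin.sum_univ_eq_sum_range
      (fun r => G (l : ℕ) r • (zElt k i ^ r * v k i ((l : ℕ) + 1))) (2 * (l : ℕ) + 1)]
    refine Finset.sum_congr rfl fun r _ => ?_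
    simp only [hG]
    rw [dif_pos ⟨l.isLt, r.isLt⟩]
    rfl
  have hrel : ∑ l ∈ Finset.Icc 1 i, ∑ r ∈ Finset.range (2 * l - 1),
      (fun l r => G (l - 1) r) l r • (zElt k i ^ r * v k i l) = 0 := by
    rw [← Finset.Ico_add_one_right_eq_Icc, Finset.sum_Ico_eq_sum_range]
    simp only []
    rw [show i + 1 - 1 = i from rfl]
    rw [Finset.sum_congr rfl (fun t (ht : t ∈ Finset.range i) => by
      rw [show 1 + t - 1 = t by omega, show 2 * (1 + t) - 1 = 2 * t + 1 by omega,
        show 1 + t = t + 1 by omega])]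
    rw [← hsig, hg']
  have hkey := key k i hi p hp hch hip _ hrel
  obtain ⟨lf, rf⟩ := j
  have h2 := hkey ((lf : ℕ) + 1) (rf : ℕ) (by omega) (by omega : (lf : ℕ) + 1 ≤ i)
    (by have := rf.isLt; omega)
  rw [Nat.add_sub_cancel] at h2
  have h3 : G (lf : ℕ) (rf : ℕ) = g' ⟨lf, rf⟩ := by
    simp only [hG]
    rw [dif_pos ⟨lf.isLt, rf.isLt⟩]
  rw [h3] at h2
  exact h2

lemma card_chains : Fintype.card ((l : Fin i) × Fin (2 * (l : ℕ) + 1)) = i * i := by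
  rw [Fintype.card_sigma]
  simp only [Fintype.card_fin]
  rw [Fin.sum_univ_eq_sum_range (fun l => 2 * l + 1) i, sum_odds]

lemma exists_rep (hi : 0 < i) (p : ℕ) (hp : p.Prime) (hch : CharP k p) (hip : 2 * i ≤ p)
    (u : Mxy k i) : ∃ d : ((l : Fin i) × Fin (2 * (l : ℕ) + 1)) → k,
      ∑ j, d j • wfam k i j = u := by
  haveI : Nonempty ((l : Fin i) × Fin (2 * (l : ℕ) + 1)) := ⟨⟨⟨0, hi⟩, ⟨0, by omega⟩⟩⟩
  have hspan2 := (basisOfLinearIndependentOfCardEqFinrank (wfam_indep k i hi p hp hch hip)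
    (by rw [card_chains, finrank_Mxy k i hi])).span_eq
  rw [coe_basisOfLinearIndependentOfCardEqFinrank] at hspan2
  have hspan : u ∈ Submodule.span k (Set.range (wfam k i)) := by
    rw [hspan2]
    trivial
  exact (Submodule.mem_span_range_iff_exists_fun k).mp hspan

lemma swap_zpow (r : ℕ) (u : Mxy k i) :
    swapInv k i (zElt k i ^ r * u) = zElt k i ^ r * swapInv k i u := by
  rw [map_mul, map_pow, swapInv_z]

lemma swap_wfam (j : (l : Fin i) × Fin (2 * (l : ℕ) + 1)) :
    swapInv k i (wfam k i j) = ((-1 : k) ^ (i - ((j.1 : ℕ) + 1))) • wfam k i j := by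
  unfold wfam
  rw [swap_zpow, swap_v k i ((j.1 : ℕ) + 1) (by omega) (by have := j.1.isLt; omega),
    mul_smul_comm]

end Part6
-- PART 7 : the main construction
section Part7

lemma Xpow_smul (r : ℕ) (u : Mxy k i) :
    (Polynomial.X ^ r : Polynomial k) • u = zElt k i ^ r * u := by
  rw [smul_def, map_pow, Polynomial.aeval_X]

lemma C_smul (d : k) (u : Mxy k i) : (Polynomial.C d) • u = d • u := by
  rw [smul_def, Polynomial.aeval_C]
  exact (Algebra.smul_def d u).symm

/-- the `k[X]`-linear map from a cyclic module onto the span of a chain. -/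
noncomputable def compMap (hi : 0 < i) (p : ℕ) (hp : p.Prime) (hch : CharP k p)
    (hip : 2 * i ≤ p) (j : ℕ) (hj1 : 1 ≤ j) (hj2 : j ≤ i) :
    cyclic k j →ₗ[Polynomial k] Mxy k i :=
  Submodule.liftQ _ (LinearMap.toSpanSingleton (Polynomial k) (Mxy k i) (v k i j))
    (by
      rw [Ideal.span_le, Set.singleton_subset_iff, SetLike.mem_coe, LinearMap.mem_ker,
        LinearMap.toSpanSingleton_apply, Xpow_smul]
      exact z_pow_v_eq_zero k i hi p hp hch hip j hj1 hj2)

lemma compMap_mk (hi : 0 < i) (p : ℕ) (hp : p.Prime) (hch : CharP k p)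
    (hip : 2 * i ≤ p) (j : ℕ) (hj1 : 1 ≤ j) (hj2 : j ≤ i) (q : Polynomial k) :
    compMap k i hi p hp hch hip j hj1 hj2 (Submodule.Quotient.mk q) = q • v k i j := by
  unfold compMap
  rw [Submodule.liftQ_apply, LinearMap.toSpanSingleton_apply]

lemma neg_one_pow_cases (m : ℕ) : ((-1 : k)) ^ m = 1 ∨ ((-1 : k)) ^ m = -1 := by
  rcases Nat.even_or_odd m with h | h
  · exact Or.inl (Even.neg_one_pow h)
  · exact Or.inr (Odd.neg_one_pow h)

lemma construction (hi : 0 < i) (p : ℕ) (hp : p.Prime) (hch : CharP k p) (hip : 2 * i ≤ p)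
    (h2 : (2 : k) ≠ 0) (sgn : k) (hsgn : sgn = 1 ∨ sgn = -1)
    (π : ℕ → Prop) [DecidablePred π]
    (hπ : ∀ l, 1 ≤ l → l ≤ i → (π l ↔ (-1 : k) ^ (i - l) = sgn))
    (N : Submodule (Polynomial k) (Mxy k i))
    (hN : ∀ u : Mxy k i, u ∈ N ↔ swapInv k i u = sgn • u) :
    Nonempty (N ≃ₗ[Polynomial k]
      DirectSum {j : ℕ // 1 ≤ j ∧ j ≤ i ∧ π j} (fun j => cyclic k j.1)) := by
  haveI : Fintype {j : ℕ // 1 ≤ j ∧ j ≤ i ∧ π j} :=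
    Fintype.subtype ((Finset.Icc 1 i).filter π)
      (by intro x; rw [Finset.mem_filter, Finset.mem_Icc, and_assoc])
  set Φ : DirectSum {j : ℕ // 1 ≤ j ∧ j ≤ i ∧ π j} (fun j => cyclic k j.1)
      →ₗ[Polynomial k] Mxy k i
    := DirectSum.toModule (Polynomial k) {j : ℕ // 1 ≤ j ∧ j ≤ i ∧ π j} (Mxy k i)
      (fun j => compMap k i hi p hp hch hip j.1 j.2.1 j.2.2.1) with hΦ
  have hΦof : ∀ (j : {j : ℕ // 1 ≤ j ∧ j ≤ i ∧ π j}) (m : cyclic k j.1),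
      Φ (DirectSum.of _ j m) = compMap k i hi p hp hch hip j.1 j.2.1 j.2.2.1 m := by
    intro j m
    rw [hΦ, ← DirectSum.lof_eq_of (Polynomial k), DirectSum.toModule_lof]
  -- range computation
  have hrange : LinearMap.range Φ = N := by
    apply le_antisymm
    · rintro _ ⟨x, rfl⟩
      induction x using DirectSum.induction_on with
      | zero => rw [map_zero]; exact N.zero_mem
      | of j m =>
          obtain ⟨q, rfl⟩ := Submodule.Quotient.mk_surjective _ m
          rw [hΦof, compMap_mk]
          refine N.smul_mem q ?_
          rw [hN, swap_v k i j.1 j.2.1 j.2.2.1, (hπ j.1 j.2.1 j.2.2.1).mp j.2.2.2]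
      | add x y hx hy => rw [map_add]; exact N.add_mem hx hy
    · intro u hu
      obtain ⟨d, hd⟩ := exists_rep k i hi p hp hch hip u
      have hswap : swapInv k i u = sgn • u := (hN u).mp hu
      have hdiff : ∑ j, (d j * ((-1 : k) ^ (i - ((j.1 : ℕ) + 1)) - sgn)) • wfam k i j = 0 := by
        have hA : swapInv k i u
            = ∑ j, (d j * (-1 : k) ^ (i - ((j.1 : ℕ) + 1))) • wfam k i j := by
          rw [← hd, map_sum]
          refine Finset.sum_congr rfl fun j _ => ?_
          rw [map_smul, swap_wfam, smul_smul]
        have hB : sgn • u = ∑ j, (d j * sgn) • wfam k i j := by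
          rw [← hd, Finset.smul_sum]
          refine Finset.sum_congr rfl fun j _ => ?_
          rw [smul_smul, mul_comm]
        calc ∑ j, (d j * ((-1 : k) ^ (i - ((j.1 : ℕ) + 1)) - sgn)) • wfam k i j
            = ∑ j, ((d j * (-1 : k) ^ (i - ((j.1 : ℕ) + 1))) • wfam k i j
                - (d j * sgn) • wfam k i j) := by
              refine Finset.sum_congr rfl fun j _ => ?_
              rw [← sub_smul, ← mul_sub]
          _ = (∑ j, (d j * (-1 : k) ^ (i - ((j.1 : ℕ) + 1))) • wfam k i j)
                - ∑ j, (d j * sgn) • wfam k i j := Finset.sum_sub_distrib _ _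
          _ = swapInv k i u - sgn • u := by rw [hA, hB]
          _ = 0 := by rw [hswap, sub_self]
      have hvanish := (Fintype.linearIndependent_iff.mp (wfam_indep k i hi p hp hch hip)) _ hdiff
      rw [← hd]
      refine Submodule.sum_mem _ fun j _ => ?_
      by_cases hε : (-1 : k) ^ (i - ((j.1 : ℕ) + 1)) = sgn
      · have hπj : π ((j.1 : ℕ) + 1) :=
          (hπ _ (by omega) (by have := j.1.isLt; omega)).mpr hε
        refine ⟨DirectSum.of _ (⟨(j.1 : ℕ) + 1, by omega, by have := j.1.isLt; omega, hπj⟩ :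
            {j : ℕ // 1 ≤ j ∧ j ≤ i ∧ π j})
          (Submodule.Quotient.mk (Polynomial.C (d j) * Polynomial.X ^ (j.2 : ℕ))), ?_⟩
        rw [hΦof, compMap_mk, mul_smul, Xpow_smul, C_smul]
        rfl
      · have hd0 : d j = 0 := by
          have h0 := hvanish j
          rcases mul_eq_zero.mp h0 with h | h
          · exact h
          · exact absurd (sub_eq_zero.mp h) hε
        rw [hd0, zero_smul]
        exact (LinearMap.range Φ).zero_mem
  -- injectivity
  have hinj : Function.Injective Φ := by
    rw [injective_iff_map_eq_zero]
    intro x hx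
    set mm : {j : ℕ // 1 ≤ j ∧ j ≤ i ∧ π j} → Polynomial k
      := fun j => (Quotient.out (x j)) %ₘ (Polynomial.X ^ (2 * j.1 - 1)) with hmm
    have houtx : ∀ j : {j : ℕ // 1 ≤ j ∧ j ≤ i ∧ π j},
        x j = Submodule.Quotient.mk (mm j
          + Polynomial.X ^ (2 * j.1 - 1) * (Quotient.out (x j) /ₘ Polynomial.X ^ (2 * j.1 - 1))) := by
      intro j
      conv_lhs => rw [← Quotient.out_eq' (x j)]
      rw [Submodule.Quotient.mk''_eq_mk]
      congr 1
      exact (Polynomial.modByMonic_add_div _ _).symm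
    have hdeg : ∀ j : {j : ℕ // 1 ≤ j ∧ j ≤ i ∧ π j},
        (mm j).natDegree < 2 * j.1 - 1 := by
      intro j
      by_cases h0 : mm j = 0
      · rw [h0, Polynomial.natDegree_zero]
        have := j.2.1
        omega
      · have hlt := Polynomial.degree_modByMonic_lt (Quotient.out (x j))
          (Polynomial.monic_X_pow (n := 2 * j.1 - 1) (R := k))
        rw [Polynomial.degree_X_pow] at hlt
        exact (Polynomial.natDegree_lt_iff_degree_lt h0).mpr (by exact_mod_cast hlt)
    have hcomp : ∀ j : {j : ℕ // 1 ≤ j ∧ j ≤ i ∧ π j},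
        compMap k i hi p hp hch hip j.1 j.2.1 j.2.2.1 (x j) = (mm j) • v k i j.1 := by
      intro j
      rw [houtx j, compMap_mk, add_smul, mul_comm, mul_smul, Xpow_smul,
        z_pow_v_eq_zero k i hi p hp hch hip j.1 j.2.1 j.2.2.1, smul_zero, add_zero]
    have hx1 : ∑ j, (mm j) • v k i (j.1 : ℕ) = 0 := by
      calc ∑ j, (mm j) • v k i (j.1 : ℕ)
          = ∑ j, Φ (DirectSum.of _ j (x j)) := by
            refine Finset.sum_congr rfl fun j _ => ?_
            rw [hΦof, hcomp]
        _ = Φ (∑ j, DirectSum.of _ j (x j)) := (map_sum Φ _ _).symm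
        _ = Φ x := by rw [DirectSum.sum_univ_of]
        _ = 0 := hx
    have hexp : ∀ j : {j : ℕ // 1 ≤ j ∧ j ≤ i ∧ π j},
        (mm j) • v k i (j.1 : ℕ) = ∑ r ∈ Finset.range (2 * j.1 - 1),
          (mm j).coeff r • (zElt k i ^ r * v k i j.1) := by
      intro j
      rw [smul_def, Polynomial.aeval_eq_sum_range' (hdeg j), Finset.sum_mul]
      refine Finset.sum_congr rfl fun r _ => ?_
      rw [smul_mul_assoc]
    set g : ℕ → ℕ → k := fun l r =>
      if h : 1 ≤ l ∧ l ≤ i ∧ π l then (mm ⟨l, h⟩).coeff r else 0 with hg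
    have hrel : ∑ l ∈ Finset.Icc 1 i, ∑ r ∈ Finset.range (2 * l - 1),
        g l r • (zElt k i ^ r * v k i l) = 0 := by
      rw [← hx1]
      have hF : ∀ l ∈ Finset.Icc 1 i,
          ∑ r ∈ Finset.range (2 * l - 1), g l r • (zElt k i ^ r * v k i l)
            = if h : 1 ≤ l ∧ l ≤ i ∧ π l then (mm ⟨l, h⟩) • v k i l else 0 := by
        intro l hmem
        by_cases h : 1 ≤ l ∧ l ≤ i ∧ π l
        · rw [dif_pos h, hexp ⟨l, h⟩]
          refine Finset.sum_congr rfl fun r _ => ?_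
          simp only [hg]
          rw [dif_pos h]
        · rw [dif_neg h]
          apply Finset.sum_eq_zero
          intro r _
          simp only [hg]
          rw [dif_neg h, zero_smul]
      rw [Finset.sum_congr rfl hF]
      rw [← Finset.sum_filter_of_ne (p := fun l => 1 ≤ l ∧ l ≤ i ∧ π l)
        (by
          intro x hxmem hne
          by_contra hc
          rw [dif_neg hc] at hne
          exact hne rfl)]
      rw [Finset.sum_subtype ((Finset.Icc 1 i).filter (fun l => 1 ≤ l ∧ l ≤ i ∧ π l))
        (p := fun l => 1 ≤ l ∧ l ≤ i ∧ π l)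
        (by intro x; rw [Finset.mem_filter, Finset.mem_Icc]; constructor
            · rintro ⟨-, h⟩; exact h
            · intro h; exact ⟨⟨h.1, h.2.1⟩, h⟩)]
      refine Finset.sum_congr ?_ fun j _ => ?_
      · rfl
      · rw [dif_pos j.2]
    have hkey := key k i hi p hp hch hip g hrel
    have hmm0 : ∀ j : {j : ℕ // 1 ≤ j ∧ j ≤ i ∧ π j}, mm j = 0 := by
      intro j
      apply Polynomial.ext
      intro r
      rw [Polynomial.coeff_zero]
      by_cases hr : r ≤ 2 * j.1 - 2
      · have hv := hkey j.1 r j.2.1 j.2.2.1 hr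
        simp only [hg] at hv
        rw [dif_pos j.2] at hv
        exact hv
      · exact Polynomial.coeff_eq_zero_of_natDegree_lt (by have := hdeg j; omega)
    apply DFinsupp.ext
    intro j
    rw [houtx j, hmm0 j, zero_add]
    show Submodule.Quotient.mk _ = (0 : cyclic k j.1)
    rw [Submodule.Quotient.mk_eq_zero]
    exact Ideal.mem_span_singleton.mpr (dvd_mul_right _ _)
  exact ⟨((LinearEquiv.ofInjective Φ hinj).trans (LinearEquiv.ofEq _ _ hrange)).symm⟩

end Part7
end VerlindeSymmetry

open VerlindeSymmetry in
/-- Let `k` have odd prime characteristic `p` and `1 ≤ i ≤ (p-1)/2`.  For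
`M = k[x,y]/(x^i,y^i)` viewed as a `k[X]`-module with `X` acting by multiplication by `x + y`,
and `M = M_S ⊕ M_A` the eigenspace decomposition under the swap involution, there are
`k[X]`-module isomorphisms
`M_S ≅ ⊕_{1 ≤ j ≤ i, j ≡ i [2]} k[X]/(X^(2j-1))` and
`M_A ≅ ⊕_{1 ≤ j ≤ i, j ≢ i [2]} k[X]/(X^(2j-1))`. -/
theorem symmetric_antisymmetric_decomposition_of_truncated_polynomials
    (k : Type*) [Field k] (p : ℕ) (hp : p.Prime) (hodd : Odd p) (hchar : CharP k p)
    (i : ℕ) (hi1 : 1 ≤ i) (hi2 : i ≤ (p - 1) / 2) :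
    Nonempty ((MS k i) ≃ₗ[Polynomial k]
        DirectSum {j : ℕ // 1 ≤ j ∧ j ≤ i ∧ j % 2 = i % 2} (fun j => cyclic k j.1))
    ∧ Nonempty ((MA k i) ≃ₗ[Polynomial k]
        DirectSum {j : ℕ // 1 ≤ j ∧ j ≤ i ∧ j % 2 ≠ i % 2} (fun j => cyclic k j.1)) := by
  have hi : 0 < i := hi1
  have hoddm : p % 2 = 1 := Nat.odd_iff.mp hodd
  have hip : 2 * i ≤ p := by omega
  have h2 : (2 : k) ≠ 0 := by
    have h2' := cast_ne_zero_of_lt k p hp hchar (n := 2) (by omega)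
      (by have := hp.two_le; omega)
    simpa using h2'
  have hm1 : (-1 : k) ≠ 1 := by
    intro h
    apply h2
    linear_combination -h
  constructor
  · refine construction k i hi p hp hchar hip h2 1 (Or.inl rfl)
      (fun j => j % 2 = i % 2) ?_ (MS k i) ?_
    · intro l hl hli
      have heq : (l % 2 = i % 2) ↔ Even (i - l) := by
        rw [Nat.even_sub hli, Nat.even_iff, Nat.even_iff]
        omega
      rw [heq]
      constructor
      · intro he
        exact he.neg_one_pow
      · intro hpow
        by_contra hodd'
        have ho : Odd (i - l) := Nat.not_even_iff_odd.mp hodd'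
        rw [ho.neg_one_pow] at hpow
        exact hm1 hpow
    · intro u
      rw [one_smul]
      exact Iff.rfl
  · refine construction k i hi p hp hchar hip h2 (-1) (Or.inr rfl)
      (fun j => j % 2 ≠ i % 2) ?_ (MA k i) ?_
    · intro l hl hli
      have heven : Even (i - l) ↔ (l % 2 = i % 2) := by
        rw [Nat.even_sub hli, Nat.even_iff, Nat.even_iff]
        omega
      have heq : ((fun j => j % 2 ≠ i % 2) l) ↔ Odd (i - l) := by
        show (l % 2 ≠ i % 2) ↔ Odd (i - l)
        rw [← Nat.not_even_iff_odd, heven]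
      rw [show (l % 2 ≠ i % 2 ↔ Odd (i - l)) from heq]
      constructor
      · intro ho
        exact ho.neg_one_pow
      · intro hpow
        by_contra he'
        have he : Even (i - l) := Nat.not_odd_iff_even.mp he'
        rw [he.neg_one_pow] at hpow
        exact hm1 hpow.symm
    · intro u
      rw [neg_one_smul]
      exact Iff.rfl
end

section
/- Let k be a field, V a k-vector space, T(V) its tensor algebra with canonical linear inclusion ι : V → T(V), regarded as a Lie algebra via the commutator ⁅a,b⁆ = ab − ba, and let 𝔣 be the Lie subalgebra of T(V) generated by ι(V). Then the Lie algebra homomorphism 𝔣 → T(V) given by the inclusion induces, via the universal property of the universal enveloping algebra, an isomorphism of associative k-algebras U(𝔣) ≅ T(V). In particular 𝔣 satisfies the Poincaré–Birkhoff–Witt property. -/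
attribute [local instance 100] LieRing.ofAssociativeRing

/-- Let `𝔣` be the Lie subalgebra of the tensor algebra `T(V)` (with commutator bracket)
generated by the image of `V`.  The algebra homomorphism `U(𝔣) → T(V)` induced, via the
universal property of the universal enveloping algebra, by the inclusion `𝔣 ↪ T(V)` is an
isomorphism of associative algebras.  In particular, `𝔣` has the Poincaré–Birkhoff–Witt
property. -/
theorem universal_enveloping_of_free_lie_algebra_iso
    (k : Type*) [Field k] (V : Type*) [AddCommGroup V] [Module k V] :
    Function.Bijective
      (UniversalEnvelopingAlgebra.lift k
        (LieSubalgebra.incl (LieSubalgebra.lieSpan k (TensorAlgebra k V)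
          (Set.range (TensorAlgebra.ι k (M := V)))))) := by
  set 𝔣 := LieSubalgebra.lieSpan k (TensorAlgebra k V)
      (Set.range (TensorAlgebra.ι k (M := V))) with h𝔣
  set f := UniversalEnvelopingAlgebra.lift k (LieSubalgebra.incl 𝔣) with hf
  -- inverse map
  set g : TensorAlgebra k V →ₐ[k] UniversalEnvelopingAlgebra k 𝔣 :=
    TensorAlgebra.lift k
      ((UniversalEnvelopingAlgebra.ι k).toLinearMap.comp
        ((LinearMap.codRestrict 𝔣.toSubmodule (TensorAlgebra.ι k)
          (fun v => LieSubalgebra.subset_lieSpan ⟨v, rfl⟩)))) with hg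
  have hfg : ∀ a : TensorAlgebra k V, f (g a) = a := by
    intro a
    have : (f.comp g) = AlgHom.id k (TensorAlgebra k V) := by
      apply TensorAlgebra.hom_ext
      ext v
      simp [hg, hf, UniversalEnvelopingAlgebra.lift_ι_apply']
      rfl
    simpa using congrArg (fun h => h a) (congrArg DFunLike.coe this)
  have key : ∀ a : TensorAlgebra k V, a ∈ 𝔣 →
      ∃ h : a ∈ 𝔣, g a = UniversalEnvelopingAlgebra.ι k ⟨a, h⟩ := by
    intro a ha
    refine LieSubalgebra.lieSpan_induction (R := k)
      (p := fun a _ => ∃ h : a ∈ 𝔣, g a = UniversalEnvelopingAlgebra.ι k ⟨a, h⟩) ?_ ?_ ?_ ?_ ?_ ha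
    · rintro x ⟨v, rfl⟩
      refine ⟨LieSubalgebra.subset_lieSpan ⟨v, rfl⟩, ?_⟩
      simp [hg]; rfl
    · exact ⟨𝔣.zero_mem, by rw [map_zero]; exact ((UniversalEnvelopingAlgebra.ι k).map_zero).symm⟩
    swap
    · intro r x _ hx
      obtain ⟨hx, hgx⟩ := hx
      refine ⟨𝔣.smul_mem r hx, ?_⟩
      have : (⟨r • x, 𝔣.smul_mem r hx⟩ : 𝔣) = r • ⟨x, hx⟩ := rfl
      rw [map_smul, hgx, this, map_smul]
    · rintro x y _ _ ⟨hx, hgx⟩ ⟨hy, hgy⟩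
      refine ⟨𝔣.add_mem hx hy, ?_⟩
      have : (⟨x + y, 𝔣.add_mem hx hy⟩ : 𝔣) = ⟨x, hx⟩ + ⟨y, hy⟩ := rfl
      rw [map_add, hgx, hgy, this, map_add]
    · rintro x y _ _ ⟨hx, hgx⟩ ⟨hy, hgy⟩
      refine ⟨𝔣.lie_mem hx hy, ?_⟩
      have : (⟨⁅x, y⁆, 𝔣.lie_mem hx hy⟩ : 𝔣) = ⁅(⟨x, hx⟩ : 𝔣), ⟨y, hy⟩⁆ := rfl
      rw [this, LieHom.map_lie]
      simp only [Ring.lie_def, map_sub, map_mul, hgx, hgy]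
  have hgf : ∀ u : UniversalEnvelopingAlgebra k 𝔣, g (f u) = u := by
    intro u
    have : (g.comp f) = AlgHom.id k (UniversalEnvelopingAlgebra k 𝔣) := by
      apply UniversalEnvelopingAlgebra.hom_ext
      ext x
      obtain ⟨h, hx⟩ := key x.1 x.2
      simp only [LieHom.coe_comp, Function.comp_apply, AlgHom.coe_toLieHom, AlgHom.coe_id,
        id_eq, AlgHom.coe_comp]
      rw [UniversalEnvelopingAlgebra.lift_ι_apply]
      exact hx
    simpa using congrArg (fun h => h u) (congrArg DFunLike.coe this)
  exact ⟨Function.LeftInverse.injective hgf, Function.RightInverse.surjective hfg⟩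
end

section
/- With the data (k, 𝔛, V, d) and the auxiliary Lie algebra g̃ as in the context, let W be any 𝔛-module. Define operators on T(V) ⊗_k W as follows: for x ∈ 𝔛, η_X(x)(u ⊗ w) = (x·u) ⊗ w + u ⊗ (x·w), where x acts on T(V) as the unique derivation with x·ι(v) = ι(x·v); for v ∈ V, η₊(v)(u ⊗ w) = (ι(v)u) ⊗ w. Then: (1) there is a unique linear map η₋ : V* → End_k(T(V) ⊗ W) such that for all f ∈ V*, w ∈ W, v ∈ V, n ≥ 0 and u ∈ V^{⊗n} ⊆ T(V): η₋(f)(1 ⊗ w) = 0 and η₋(f)((ι(v)u) ⊗ w) = −η_X(d(v⊗f))(u ⊗ w) + η₊(v)(η₋(f)(u ⊗ w)); (2) there exists a Lie algebra homomorphism Φ : g̃ → End_k(T(V) ⊗ W) (the codomain with commutator bracket) such that Φ sends the image of x ∈ 𝔛 to η_X(x), the image of v ∈ V to η₊(v), and the image of f ∈ V* to η₋(f). -/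
/-! ## Semidirect product of Lie algebras along an action by derivations -/

variable (R : Type*) [CommRing R] (L : Type*) [LieRing L] [LieAlgebra R L]
  (M : Type*) [LieRing M] [LieAlgebra R M]

/-- Type synonym for the semidirect product of Lie algebras. -/
@[nolint unusedArguments]
def LieSemidirectProduct (_δ : M →ₗ⁅R⁆ LieDerivation R L L) : Type _ := L × M

namespace LieSemidirectProduct

variable {R L M}
variable (δ : M →ₗ⁅R⁆ LieDerivation R L L)

instance : AddCommGroup (LieSemidirectProduct R L M δ) :=
  inferInstanceAs (AddCommGroup (L × M))

instance : Module R (LieSemidirectProduct R L M δ) :=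
  inferInstanceAs (Module R (L × M))

/-- Build an element of the semidirect product. -/
def mk (t : L) (x : M) : LieSemidirectProduct R L M δ := (t, x)

@[simp] lemma mk_fst (t : L) (x : M) : (mk δ t x).1 = t := rfl
@[simp] lemma mk_snd (t : L) (x : M) : (mk δ t x).2 = x := rfl

instance : LieRing (LieSemidirectProduct R L M δ) where
  bracket p q := (⁅p.1, q.1⁆ + δ p.2 q.1 - δ q.2 p.1, ⁅p.2, q.2⁆)
  add_lie p q r := by
    show Prod.mk _ _ = Prod.mk _ _ + Prod.mk _ _
    erw [Prod.mk_add_mk]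
    refine congrArg₂ Prod.mk ?_ (add_lie _ _ _)
    show ⁅p.1 + q.1, r.1⁆ + δ (p.2 + q.2) r.1 - δ r.2 (p.1 + q.1) = _
    simp only [add_lie, LieDerivation.add_apply, map_add]
    abel
  lie_add p q r := by
    show Prod.mk _ _ = Prod.mk _ _ + Prod.mk _ _
    erw [Prod.mk_add_mk]
    refine congrArg₂ Prod.mk ?_ (lie_add _ _ _)
    show ⁅p.1, q.1 + r.1⁆ + δ p.2 (q.1 + r.1) - δ (q.2 + r.2) p.1 = _
    simp only [lie_add, LieDerivation.add_apply, map_add]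
    abel
  lie_self p := by
    show Prod.mk _ _ = (0 : L × M)
    rw [Prod.mk_eq_zero]
    constructor
    · show ⁅p.1, p.1⁆ + δ p.2 p.1 - δ p.2 p.1 = 0
      simp
    · exact lie_self _
  leibniz_lie p q r := by
    show Prod.mk _ _ = Prod.mk _ _ + Prod.mk _ _
    erw [Prod.mk_add_mk]
    refine congrArg₂ Prod.mk ?_ (leibniz_lie _ _ _)
    show ⁅p.1, ⁅q.1, r.1⁆ + δ q.2 r.1 - δ r.2 q.1⁆ + δ p.2 (⁅q.1, r.1⁆ + δ q.2 r.1 - δ r.2 q.1)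
        - δ ⁅q.2, r.2⁆ p.1
      = (⁅⁅p.1, q.1⁆ + δ p.2 q.1 - δ q.2 p.1, r.1⁆ + δ ⁅p.2, q.2⁆ r.1
          - δ r.2 (⁅p.1, q.1⁆ + δ p.2 q.1 - δ q.2 p.1))
        + (⁅q.1, ⁅p.1, r.1⁆ + δ p.2 r.1 - δ r.2 p.1⁆ + δ q.2 (⁅p.1, r.1⁆ + δ p.2 r.1 - δ r.2 p.1)
          - δ ⁅p.2, r.2⁆ q.1)
    have hskew : ⁅δ r.2 p.1, q.1⁆ = -⁅q.1, δ r.2 p.1⁆ := (lie_skew _ _).symm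
    simp only [lie_add, add_lie, lie_sub, sub_lie, map_add, map_sub,
      LieHom.map_lie, LieDerivation.lie_apply, LieDerivation.apply_lie_eq_add, hskew,
      LieDerivation.add_apply, LieDerivation.sub_apply]
    rw [leibniz_lie p.1 q.1 r.1]
    abel

instance : LieAlgebra R (LieSemidirectProduct R L M δ) where
  lie_smul c p q := by
    show Prod.mk _ _ = c • Prod.mk _ _
    erw [Prod.smul_mk]
    refine congrArg₂ Prod.mk ?_ (lie_smul _ _ _)
    show ⁅p.1, c • q.1⁆ + δ p.2 (c • q.1) - δ (c • q.2) p.1 = _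
    simp only [lie_smul, LieDerivation.smul_apply, smul_add, smul_sub, map_smul]

@[simp] lemma bracket_def (p q : LieSemidirectProduct R L M δ) :
    ⁅p, q⁆ = (mk δ (⁅p.1, q.1⁆ + δ p.2 q.1 - δ q.2 p.1) ⁅p.2, q.2⁆) := rfl

/-- The canonical inclusion of `L` into the semidirect product. -/
def inl : L →ₗ⁅R⁆ LieSemidirectProduct R L M δ where
  toFun t := mk δ t 0
  map_add' t s := by
    show Prod.mk _ _ = Prod.mk _ _ + Prod.mk _ _
    erw [Prod.mk_add_mk, add_zero]
  map_smul' c t := by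
    show Prod.mk _ _ = c • Prod.mk _ _
    erw [Prod.smul_mk, smul_zero]
  map_lie' {t s} := by
    show mk δ ⁅t, s⁆ 0 = mk δ (⁅t, s⁆ + δ 0 s - δ 0 t) ⁅(0 : M), (0 : M)⁆
    simp [mk]; rfl

/-- The canonical inclusion of `M` into the semidirect product. -/
def inr : M →ₗ⁅R⁆ LieSemidirectProduct R L M δ where
  toFun x := mk δ 0 x
  map_add' x y := by
    show Prod.mk _ _ = Prod.mk _ _ + Prod.mk _ _
    erw [Prod.mk_add_mk, add_zero]
  map_smul' c x := by
    show Prod.mk _ _ = c • Prod.mk _ _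
    erw [Prod.smul_mk, smul_zero]
  map_lie' {x y} := by
    show mk δ 0 ⁅x, y⁆ = mk δ (⁅(0 : L), (0 : L)⁆ + δ x 0 - δ y 0) ⁅x, y⁆
    simp [mk]; rfl

end LieSemidirectProduct

/-! ## The contragredient construction -/

attribute [local instance 100] LieRing.ofAssociativeRing

open TensorProduct

namespace Contragredient

variable (k : Type*) [Field k]
variable {X : Type*} [LieRing X] [LieAlgebra k X]
variable (V : Type*) [AddCommGroup V] [Module k V]

/-- The action of `X` on the dual of `V` induced by a representation `φ`:
`(x · f) v = - f (x · v)`. -/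
def dualAct (φ : X →ₗ⁅k⁆ Module.End k V) (x : X) (f : Module.Dual k V) :
    Module.Dual k V :=
  -(f ∘ₗ φ x)

/-- The free Lie algebra on `V ⊕ V*`: the Lie subalgebra of the tensor algebra
(with commutator bracket) generated by `V ⊕ V*`. -/
def F : LieSubalgebra k (TensorAlgebra k (V × Module.Dual k V)) :=
  LieSubalgebra.lieSpan k _ (Set.range (TensorAlgebra.ι k))

/-- The canonical inclusion of `V ⊕ V*` into the free Lie algebra on it. -/
def ιF (w : V × Module.Dual k V) : F k V :=
  ⟨TensorAlgebra.ι k w, LieSubalgebra.subset_lieSpan ⟨w, rfl⟩⟩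

variable {V}
variable (δ : X →ₗ⁅k⁆ LieDerivation k (F k V) (F k V))
variable (d : V ⊗[k] Module.Dual k V →ₗ[k] X)

/-- The semidirect product `FLie(V ⊕ V*) ⋊ X`. -/
abbrev SD := LieSemidirectProduct k (F k V) X δ

/-- The defining relations of the auxiliary contragredient Lie algebra. -/
def rel : Set (SD k δ) :=
  { p | ∃ (v : V) (f : Module.Dual k V),
      p = LieSemidirectProduct.mk δ ⁅ιF k V (v, 0), ιF k V (0, f)⁆ (-(d (v ⊗ₜ[k] f))) }

/-- The ideal of relations. -/
def I0 : LieIdeal k (SD k δ) := LieSubmodule.lieSpan k _ (rel k δ d)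

/-- The auxiliary contragredient Lie algebra `g̃(ρ, d)`. -/
abbrev gt := SD k δ ⧸ I0 k δ d

/-- The quotient map onto the auxiliary contragredient Lie algebra. -/
def π : SD k δ →ₗ⁅k⁆ gt k δ d :=
  { (I0 k δ d).toSubmodule.mkQ with
    map_lie' := fun {_ _} => rfl }

/-- The canonical map from `X` to `g̃`. -/
def ι₀ : X →ₗ⁅k⁆ gt k δ d := (π k δ d).comp (LieSemidirectProduct.inr δ)

/-- The canonical map from `V` to `g̃`. -/
def gtV (v : V) : gt k δ d := π k δ d (LieSemidirectProduct.mk δ (ιF k V (v, 0)) 0)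

/-- The canonical map from `V*` to `g̃`. -/
def gtD (f : Module.Dual k V) : gt k δ d :=
  π k δ d (LieSemidirectProduct.mk δ (ιF k V (0, f)) 0)

/-- The positive subalgebra `n₊` of `g̃`: the Lie subalgebra generated by the image of `V`. -/
def nPlus : LieSubalgebra k (gt k δ d) :=
  LieSubalgebra.lieSpan k _ (Set.range (gtV k δ d))

/-- The negative subalgebra `n₋` of `g̃`: the Lie subalgebra generated by the image of `V*`. -/
def nMinus : LieSubalgebra k (gt k δ d) :=
  LieSubalgebra.lieSpan k _ (Set.range (gtD k δ d))

universe w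

/-- `X` has enough modules: for every nonzero `x : X` there is a representation of `X`
on which `x` acts nontrivially. -/
def HasEnoughModules (k : Type*) [Field k] (X : Type*) [LieRing X] [LieAlgebra k X] : Prop :=
  ∀ x : X, x ≠ 0 →
    ∃ (W : Type w) (_ : AddCommGroup W) (_ : Module k W)
      (ρW : X →ₗ⁅k⁆ Module.End k W), ρW x ≠ 0

end Contragredient

namespace Contragredient

open TensorProduct

section Aux
set_option synthInstance.maxHeartbeats 400000
set_option maxHeartbeats 1600000

variable {k : Type*} [Field k] {V : Type*} [AddCommGroup V] [Module k V]
  {W : Type*} [AddCommGroup W] [Module k W]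

/-- Endomorphisms of `T(V) ⊗ W`. -/
abbrev EndT (k V W : Type*) [Field k] [AddCommGroup V] [Module k V]
    [AddCommGroup W] [Module k W] : Type _ :=
  Module.End k (TensorAlgebra k V ⊗[k] W)

lemma iSup_range_pow :
    (⨆ n : ℕ, (LinearMap.range (TensorAlgebra.ι k : V →ₗ[k] TensorAlgebra k V)) ^ n) = ⊤ :=
  DirectSum.IsInternal.submodule_iSup_eq_top (DirectSum.Decomposition.isInternal _)

lemma homog_ext {E F : EndT k V W}
    (h : ∀ (n : ℕ) (u : TensorAlgebra k V),
      u ∈ (LinearMap.range (TensorAlgebra.ι k : V →ₗ[k] TensorAlgebra k V)) ^ n →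
      ∀ w : W, E (u ⊗ₜ[k] w) = F (u ⊗ₜ[k] w)) : E = F := by
  let p : Submodule k (TensorAlgebra k V) :=
    { carrier := {u | ∀ w : W, E (u ⊗ₜ[k] w) = F (u ⊗ₜ[k] w)}
      add_mem' := fun {a b} ha hb w => by
        rw [add_tmul, map_add, map_add, ha w, hb w]
      zero_mem' := fun w => by rw [zero_tmul, map_zero, map_zero]
      smul_mem' := fun r a ha w => by
        rw [← smul_tmul', map_smul, map_smul, ha w] }
  have htop : (⊤ : Submodule k (TensorAlgebra k V)) ≤ p := by
    rw [← iSup_range_pow (k := k) (V := V)]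
    exact iSup_le fun n u hu => h n u hu
  exact TensorProduct.ext' fun u w => htop Submodule.mem_top w

lemma vanish {E : EndT k V W}
    (h1 : ∀ w : W, E ((1 : TensorAlgebra k V) ⊗ₜ[k] w) = 0)
    (hstep : ∀ (v : V) (n : ℕ) (u : TensorAlgebra k V),
      u ∈ (LinearMap.range (TensorAlgebra.ι k : V →ₗ[k] TensorAlgebra k V)) ^ n →
      ∀ w : W, E ((TensorAlgebra.ι k v * u) ⊗ₜ[k] w)
        = LinearMap.rTensor W (LinearMap.mulLeft k (TensorAlgebra.ι k v)) (E (u ⊗ₜ[k] w))) :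
    E = 0 := by
  refine homog_ext fun n => ?_
  induction n with
  | zero =>
    intro u hu w
    rw [pow_zero] at hu
    obtain ⟨r, rfl⟩ := Submodule.mem_one.mp hu
    simp only [LinearMap.zero_apply]
    rw [Algebra.algebraMap_eq_smul_one, ← smul_tmul', map_smul, h1 w, smul_zero]
  | succ n ih =>
    intro u hu w
    rw [pow_succ'] at hu
    revert w
    refine Submodule.mul_induction_on hu ?_ ?_
    · rintro m ⟨v, rfl⟩ u' hu' w
      simp only [LinearMap.zero_apply] at ih ⊢
      rw [hstep v n u' hu' w, ih u' hu' w, map_zero]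
    · intro a b ha hb w
      simp only [LinearMap.zero_apply] at ha hb ⊢
      rw [add_tmul, map_add, ha w, hb w, add_zero]

/-- Left multiplication by `ι v` on the `T(V)` factor, as a linear map in `v`. -/
noncomputable def Pmap : V →ₗ[k] EndT k V W :=
  (LinearMap.rTensorHom W) ∘ₗ (LinearMap.mul k (TensorAlgebra k V)) ∘ₗ (TensorAlgebra.ι k)

lemma Pmap_apply (v : V) :
    (Pmap v : EndT k V W) = LinearMap.rTensor W (LinearMap.mulLeft k (TensorAlgebra.ι k v)) :=
  rfl

/-- The generating map into the triangular extension, used to define `η₋`. -/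
noncomputable def genMap (c : V →ₗ[k] EndT k V W) :
    V →ₗ[k] TrivSqZeroExt (EndT k V W) (EndT k V W) where
  toFun v := TrivSqZeroExt.inl (Pmap v) + TrivSqZeroExt.inr (c v)
  map_add' a b := by
    ext <;> simp [TrivSqZeroExt.fst_add, TrivSqZeroExt.snd_add]
  map_smul' r a := by
    ext <;> simp

/-- The algebra homomorphism from `T(V)` into the triangular extension. -/
noncomputable def Psi (c : V →ₗ[k] EndT k V W) :
    TensorAlgebra k V →ₐ[k] TrivSqZeroExt (EndT k V W) (EndT k V W) :=
  TensorAlgebra.lift k (genMap c)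

lemma Psi_fst (c : V →ₗ[k] EndT k V W) (u : TensorAlgebra k V) :
    (Psi c u).fst = LinearMap.rTensor W (LinearMap.mulLeft k u) := by
  induction u using TensorAlgebra.induction with
  | algebraMap r =>
    have h1 : LinearMap.mulLeft k (algebraMap k (TensorAlgebra k V) r)
        = r • LinearMap.id := by
      ext a
      simp [Algebra.smul_def]
    rw [AlgHom.commutes, h1, LinearMap.rTensor_smul, LinearMap.rTensor_id]
    rfl
  | ι v =>
    rw [Psi, TensorAlgebra.lift_ι_apply]
    simp [genMap, Pmap_apply]
  | mul a b ha hb =>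
    rw [map_mul, TrivSqZeroExt.fst_mul, ha, hb, LinearMap.mulLeft_mul, LinearMap.rTensor_comp,
      Module.End.mul_eq_comp]
  | add a b ha hb =>
    have hml : LinearMap.mulLeft k (a + b)
        = LinearMap.mulLeft k a + LinearMap.mulLeft k b :=
      map_add (LinearMap.mul k (TensorAlgebra k V)) a b
    rw [map_add, TrivSqZeroExt.fst_add, ha, hb, hml, LinearMap.rTensor_add]

/-- The "second component" linear map defining `η₋`. -/
noncomputable def Smap (c : V →ₗ[k] EndT k V W) :
    TensorAlgebra k V →ₗ[k] EndT k V W where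
  toFun u := (Psi c u).snd
  map_add' a b := by
    show (Psi c (a + b)).snd = (Psi c a).snd + (Psi c b).snd
    rw [map_add, TrivSqZeroExt.snd_add]
  map_smul' r a := by
    show (Psi c (r • a)).snd = r • (Psi c a).snd
    rw [map_smul, TrivSqZeroExt.snd_smul]

lemma Smap_one (c : V →ₗ[k] EndT k V W) : Smap c 1 = 0 := by
  show (Psi c 1).snd = 0
  rw [map_one, TrivSqZeroExt.snd_one]

lemma Smap_ι_mul (c : V →ₗ[k] EndT k V W) (v : V) (u : TensorAlgebra k V) :
    Smap c (TensorAlgebra.ι k v * u)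
      = Pmap v * Smap c u + c v * LinearMap.rTensor W (LinearMap.mulLeft k u) := by
  show (Psi c (TensorAlgebra.ι k v * u)).snd = _
  have h : Psi c (TensorAlgebra.ι k v) = genMap c v := TensorAlgebra.lift_ι_apply _ _
  rw [map_mul, TrivSqZeroExt.snd_mul, h, Psi_fst]
  simp only [genMap, LinearMap.coe_mk, AddHom.coe_mk, TrivSqZeroExt.fst_add,
    TrivSqZeroExt.fst_inl, TrivSqZeroExt.fst_inr, TrivSqZeroExt.snd_add,
    TrivSqZeroExt.snd_inl, TrivSqZeroExt.snd_inr, add_zero, zero_add,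
    smul_eq_mul, MulOpposite.smul_eq_mul_unop, MulOpposite.unop_op]
  rfl

/-- The recursively-defined operator `η₋(f)` (here parametrised by the linear map
`c : v ↦ -η_X(d(v ⊗ f))`). -/
noncomputable def etaM0 (c : V →ₗ[k] EndT k V W) : EndT k V W :=
  TensorProduct.lift
    (((LinearMap.llcomp k W (TensorAlgebra k V ⊗[k] W) (TensorAlgebra k V ⊗[k] W)).flip
      ((TensorProduct.mk k (TensorAlgebra k V) W) 1)) ∘ₗ Smap c)

lemma etaM0_tmul (c : V →ₗ[k] EndT k V W) (u : TensorAlgebra k V) (w : W) :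
    etaM0 c (u ⊗ₜ[k] w) = Smap c u ((1 : TensorAlgebra k V) ⊗ₜ[k] w) := rfl

lemma etaM0_one (c : V →ₗ[k] EndT k V W) (w : W) :
    etaM0 c ((1 : TensorAlgebra k V) ⊗ₜ[k] w) = 0 := by
  rw [etaM0_tmul, Smap_one, LinearMap.zero_apply]

lemma etaM0_rec (c : V →ₗ[k] EndT k V W) (v : V) (u : TensorAlgebra k V) (w : W) :
    etaM0 c ((TensorAlgebra.ι k v * u) ⊗ₜ[k] w)
      = c v (u ⊗ₜ[k] w) + Pmap v (etaM0 c (u ⊗ₜ[k] w)) := by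
  rw [etaM0_tmul, Smap_ι_mul, LinearMap.add_apply, Module.End.mul_apply, Module.End.mul_apply,
    LinearMap.rTensor_tmul, LinearMap.mulLeft_apply, mul_one, ← etaM0_tmul, add_comm]

lemma deriv_ext' (E : Module.End k (TensorAlgebra k V))
    (hE : ∀ a b, E (a * b) = E a * b + a * E b)
    (h0 : ∀ v : V, E (TensorAlgebra.ι k v) = 0) : E = 0 := by
  have h1 : E 1 = 0 := by
    have := hE 1 1
    rw [one_mul, one_mul, mul_one] at this
    -- E 1 = E 1 + E 1
    have := left_eq_add.mp this
    exact this
  ext a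
  simp only [LinearMap.zero_apply]
  induction a using TensorAlgebra.induction with
  | algebraMap r => rw [Algebra.algebraMap_eq_smul_one, map_smul, h1, smul_zero]
  | ι v => exact h0 v
  | mul a b ha hb => rw [hE, ha, hb, zero_mul, mul_zero, add_zero]
  | add a b ha hb => rw [map_add, ha, hb, add_zero]

end Aux
end Contragredient

namespace Contragredient

open TensorProduct

section Aux2
set_option synthInstance.maxHeartbeats 1000000
set_option maxHeartbeats 3200000

variable {k : Type*} [Field k]
  {X : Type*} [LieRing X] [LieAlgebra k X]
  {V : Type*} [AddCommGroup V] [Module k V]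
  {W : Type*} [AddCommGroup W] [Module k W]

/-- The algebra homomorphism `T(V ⊕ V*) → End(T(V) ⊗ W)` induced by `η₊` and `η₋`. -/
noncomputable def Theta (ηM : Module.Dual k V →ₗ[k] EndT k V W) :
    TensorAlgebra k (V × Module.Dual k V) →ₐ[k] EndT k V W :=
  TensorAlgebra.lift k
    (Pmap ∘ₗ LinearMap.fst k V (Module.Dual k V) + ηM ∘ₗ LinearMap.snd k V (Module.Dual k V))

lemma Theta_ι (ηM : Module.Dual k V →ₗ[k] EndT k V W) (v : V) (f : Module.Dual k V) :
    Theta ηM (TensorAlgebra.ι k (v, f)) = Pmap v + ηM f := by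
  rw [Theta, TensorAlgebra.lift_ι_apply]
  rfl

lemma Theta_lie (ηM : Module.Dual k V →ₗ[k] EndT k V W)
    (a b : TensorAlgebra k (V × Module.Dual k V)) :
    Theta ηM ⁅a, b⁆ = ⁅Theta ηM a, Theta ηM b⁆ := by
  rw [Ring.lie_def, Ring.lie_def, map_sub, map_mul, map_mul]

lemma F_coe_add (a b : F k V) :
    ((a + b : F k V) : TensorAlgebra k (V × Module.Dual k V)) = ↑a + ↑b := rfl

lemma F_coe_sub (a b : F k V) :
    ((a - b : F k V) : TensorAlgebra k (V × Module.Dual k V)) = ↑a - ↑b := rfl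

lemma F_coe_smul (r : k) (a : F k V) :
    ((r • a : F k V) : TensorAlgebra k (V × Module.Dual k V)) = r • (↑a : TensorAlgebra k (V × Module.Dual k V)) := rfl

lemma F_coe_zero : ((0 : F k V) : TensorAlgebra k (V × Module.Dual k V)) = 0 := rfl

variable (δ : X →ₗ⁅k⁆ LieDerivation k (F k V) (F k V))

/-- The representation of the semidirect product on `T(V) ⊗ W`. -/
noncomputable def Phi0 (ηM : Module.Dual k V →ₗ[k] EndT k V W) (ηXl : X →ₗ[k] EndT k V W)
    (hEq : ∀ (x : X) (t : F k V),
      Theta ηM ((δ x t : F k V) : TensorAlgebra k (V × Module.Dual k V))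
        = ⁅ηXl x, Theta ηM (t : TensorAlgebra k (V × Module.Dual k V))⁆)
    (hX1 : ∀ x y : X, ⁅ηXl x, ηXl y⁆ = ηXl ⁅x, y⁆) :
    SD k δ →ₗ⁅k⁆ EndT k V W where
  toFun p := Theta ηM ((p.1 : F k V) : TensorAlgebra k (V × Module.Dual k V)) + ηXl p.2
  map_add' p q := by
    show Theta ηM (((p.1 + q.1 : F k V) : TensorAlgebra k (V × Module.Dual k V)))
        + ηXl (p.2 + q.2) = _
    rw [F_coe_add, map_add, map_add]
    abel
  map_smul' r p := by
    show Theta ηM (((r • p.1 : F k V) : TensorAlgebra k (V × Module.Dual k V)))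
        + ηXl (r • p.2) = _
    rw [F_coe_smul, map_smul, map_smul, RingHom.id_apply, smul_add]
  map_lie' {p q} := by
    show Theta ηM (((⁅p.1, q.1⁆ + δ p.2 q.1 - δ q.2 p.1 : F k V) :
          TensorAlgebra k (V × Module.Dual k V))) + ηXl ⁅p.2, q.2⁆
        = ⁅Theta ηM ((p.1 : F k V) : TensorAlgebra k (V × Module.Dual k V)) + ηXl p.2,
           Theta ηM ((q.1 : F k V) : TensorAlgebra k (V × Module.Dual k V)) + ηXl q.2⁆
    rw [F_coe_sub, F_coe_add, LieSubalgebra.coe_bracket,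
      map_sub, map_add, Theta_lie, hEq, hEq, ← hX1]
    rw [add_lie, lie_add, lie_add]
    rw [← lie_skew (Theta ηM ((p.1 : F k V) : TensorAlgebra k (V × Module.Dual k V))) (ηXl q.2)]
    abel

end Aux2
end Contragredient

namespace Contragredient

open TensorProduct

set_option synthInstance.maxHeartbeats 1000000 in
set_option maxHeartbeats 6400000 in
/-- For any `𝔛`-module `W`, the operators `η_X` (diagonal action on `T(V) ⊗ W`, with `x`
acting on `T(V)` as the unique derivation `D x` extending its action on `V`), `η₊` (left
multiplication on the `T(V)` factor), and `η₋` (defined by the stated recursion on tensor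
degree) exist — `η₋` uniquely — and assemble into a Lie algebra homomorphism
`Φ : g̃(ρ, d) → End (T(V) ⊗ W)`. -/
theorem representation_on_tensor_algebra
    {k : Type*} [Field k]
    {X : Type*} [LieRing X] [LieAlgebra k X] [FiniteDimensional k X]
    {V : Type*} [AddCommGroup V] [Module k V] [FiniteDimensional k V]
    (φ : X →ₗ⁅k⁆ Module.End k V)
    (δ : X →ₗ⁅k⁆ LieDerivation k (F k V) (F k V))
    (hδ : ∀ (x : X) (v : V) (f : Module.Dual k V),
      ((δ x (ιF k V (v, f)) : F k V) : TensorAlgebra k (V × Module.Dual k V))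
        = TensorAlgebra.ι k (φ x v, dualAct k V φ x f))
    (d : V ⊗[k] Module.Dual k V →ₗ[k] X)
    (hd : ∀ (x : X) (v : V) (f : Module.Dual k V),
      ⁅x, d (v ⊗ₜ[k] f)⁆ = d (φ x v ⊗ₜ[k] f) + d (v ⊗ₜ[k] dualAct k V φ x f))
    {W : Type*} [AddCommGroup W] [Module k W]
    (ρW : X →ₗ⁅k⁆ Module.End k W)
    (D : X → Module.End k (TensorAlgebra k V))
    (hD₁ : ∀ (x : X) (a b : TensorAlgebra k V), D x (a * b) = D x a * b + a * D x b)
    (hD₂ : ∀ (x : X) (v : V), D x (TensorAlgebra.ι k v) = TensorAlgebra.ι k (φ x v))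
    -- the diagonal action of `𝔛` on `T(V) ⊗ W`
    (ηX : X → Module.End k (TensorAlgebra k V ⊗[k] W))
    (hηX : ∀ x : X, ηX x = LinearMap.rTensor W (D x)
      + LinearMap.lTensor (TensorAlgebra k V) (ρW x))
    -- the action of `V` on `T(V) ⊗ W` by left multiplication
    (ηP : V → Module.End k (TensorAlgebra k V ⊗[k] W))
    (hηP : ∀ v : V, ηP v = LinearMap.rTensor W (LinearMap.mulLeft k (TensorAlgebra.ι k v))) :
    -- (1) existence and uniqueness of `η₋`
    (∃! ηM : Module.Dual k V →ₗ[k] Module.End k (TensorAlgebra k V ⊗[k] W),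
      (∀ (f : Module.Dual k V) (w : W), ηM f ((1 : TensorAlgebra k V) ⊗ₜ[k] w) = 0) ∧
      (∀ (f : Module.Dual k V) (v : V) (w : W) (n : ℕ) (u : TensorAlgebra k V),
        u ∈ (LinearMap.range (TensorAlgebra.ι k : V →ₗ[k] TensorAlgebra k V)) ^ n →
        ηM f ((TensorAlgebra.ι k v * u) ⊗ₜ[k] w)
          = - ηX (d (v ⊗ₜ[k] f)) (u ⊗ₜ[k] w) + ηP v (ηM f (u ⊗ₜ[k] w)))) ∧
    -- (2) for `η₋` as in (1), the three operators define a representation of `g̃`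
    (∀ ηM : Module.Dual k V →ₗ[k] Module.End k (TensorAlgebra k V ⊗[k] W),
      ((∀ (f : Module.Dual k V) (w : W), ηM f ((1 : TensorAlgebra k V) ⊗ₜ[k] w) = 0) ∧
       (∀ (f : Module.Dual k V) (v : V) (w : W) (n : ℕ) (u : TensorAlgebra k V),
        u ∈ (LinearMap.range (TensorAlgebra.ι k : V →ₗ[k] TensorAlgebra k V)) ^ n →
        ηM f ((TensorAlgebra.ι k v * u) ⊗ₜ[k] w)
          = - ηX (d (v ⊗ₜ[k] f)) (u ⊗ₜ[k] w) + ηP v (ηM f (u ⊗ₜ[k] w)))) →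
      ∃ Φ : gt k δ d →ₗ⁅k⁆ Module.End k (TensorAlgebra k V ⊗[k] W),
        (∀ x : X, Φ (ι₀ k δ d x) = ηX x) ∧
        (∀ v : V, Φ (gtV k δ d v) = ηP v) ∧
        (∀ f : Module.Dual k V, Φ (gtD k δ d f) = ηM f)) := by
  classical
  -- basic facts about the derivations `D x`
  have hD1zero : ∀ x : X, D x 1 = 0 := by
    intro x
    have h := hD₁ x 1 1
    rw [one_mul, one_mul, mul_one] at h
    exact left_eq_add.mp h
  have hDadd : ∀ x y : X, D (x + y) = D x + D y := by
    intro x y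
    have h : D (x + y) - D x - D y = 0 := by
      apply deriv_ext'
      · intro a b
        simp only [LinearMap.sub_apply, hD₁, sub_mul, mul_sub]
        abel
      · intro v
        simp only [LinearMap.sub_apply, hD₂, map_add, LinearMap.add_apply, map_add]
        abel
    rw [sub_sub, sub_eq_zero] at h
    exact h
  have hDsmul : ∀ (c : k) (x : X), D (c • x) = c • D x := by
    intro c x
    have h : D (c • x) - c • D x = 0 := by
      apply deriv_ext'
      · intro a b
        simp only [LinearMap.sub_apply, LinearMap.smul_apply, hD₁, smul_add, smul_mul_assoc,
          mul_smul_comm, sub_mul, mul_sub]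
        abel
      · intro v
        simp only [LinearMap.sub_apply, LinearMap.smul_apply, hD₂, map_smul,
          LinearMap.smul_apply, map_smul, sub_self]
    rw [sub_eq_zero] at h
    exact h
  have hDlie : ∀ x y : X, D ⁅x, y⁆ = D x * D y - D y * D x := by
    intro x y
    have h : D ⁅x, y⁆ - (D x * D y - D y * D x) = 0 := by
      apply deriv_ext'
      · intro a b
        simp only [LinearMap.sub_apply, Module.End.mul_apply, hD₁, map_add]
        noncomm_ring
      · intro v
        simp only [LinearMap.sub_apply, Module.End.mul_apply, hD₂, LieHom.map_lie,
          Ring.lie_def, LinearMap.sub_apply, Module.End.mul_apply, map_sub]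
        abel
    rw [sub_eq_zero] at h
    exact h
  -- `ηX` as a linear map
  have hηXadd : ∀ x y : X, ηX (x + y) = ηX x + ηX y := by
    intro x y
    rw [hηX, hηX, hηX, hDadd, map_add, LinearMap.rTensor_add, LinearMap.lTensor_add]
    abel
  have hηXsmul : ∀ (c : k) (x : X), ηX (c • x) = c • ηX x := by
    intro c x
    rw [hηX, hηX, hDsmul, map_smul, LinearMap.rTensor_smul, LinearMap.lTensor_smul,
      smul_add]
  let ηXl : X →ₗ[k] EndT k V W :=
    { toFun := ηX
      map_add' := hηXadd
      map_smul' := hηXsmul }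
  have hηXl : ∀ x : X, ηXl x = ηX x := fun _ => rfl
  have hPmap : ∀ v : V, (Pmap v : EndT k V W) = ηP v := fun v => by
    rw [Pmap_apply, ← hηP]
  -- commutation relations among ηX, ηP
  have R1 : ∀ x y : X, ηX x * ηX y - ηX y * ηX x = ηX ⁅x, y⁆ := by
    intro x y
    apply TensorProduct.ext'
    intro u w
    simp only [hηX, hDlie, LieHom.map_lie, Ring.lie_def, LinearMap.sub_apply,
      LinearMap.add_apply, Module.End.mul_apply, LinearMap.rTensor_tmul, LinearMap.lTensor_tmul,
      map_add, sub_tmul, tmul_sub]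
    abel
  have R2 : ∀ (x : X) (v : V), ηX x * ηP v = ηP v * ηX x + ηP (φ x v) := by
    intro x v
    apply TensorProduct.ext'
    intro u w
    simp only [hηX, hηP, LinearMap.add_apply, Module.End.mul_apply, LinearMap.rTensor_tmul,
      LinearMap.lTensor_tmul, LinearMap.mulLeft_apply, map_add, hD₁, hD₂, add_tmul]
    abel
  -- the map `f ↦ (v ↦ -ηX (d (v ⊗ f)))`
  let cM : Module.Dual k V → (V →ₗ[k] EndT k V W) := fun f =>
    { toFun := fun v => -(ηX (d (v ⊗ₜ[k] f)))
      map_add' := fun a b => by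
        show -(ηX (d ((a + b) ⊗ₜ[k] f))) = -(ηX (d (a ⊗ₜ[k] f))) + -(ηX (d (b ⊗ₜ[k] f)))
        rw [add_tmul, map_add, hηXadd, neg_add]
      map_smul' := fun r a => by
        show -(ηX (d ((r • a) ⊗ₜ[k] f))) = r • -(ηX (d (a ⊗ₜ[k] f)))
        rw [← smul_tmul', map_smul, hηXsmul, smul_neg] }
  let ηM₀ : Module.Dual k V → EndT k V W := fun f => etaM0 (cM f)
  have hM0one : ∀ f w, ηM₀ f ((1 : TensorAlgebra k V) ⊗ₜ[k] w) = 0 := fun f w =>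
    etaM0_one (cM f) w
  have hM0rec : ∀ (f : Module.Dual k V) (v : V) (u : TensorAlgebra k V) (w : W),
      ηM₀ f ((TensorAlgebra.ι k v * u) ⊗ₜ[k] w)
        = - ηX (d (v ⊗ₜ[k] f)) (u ⊗ₜ[k] w) + ηP v (ηM₀ f (u ⊗ₜ[k] w)) := by
    intro f v u w
    rw [show ηM₀ f = etaM0 (cM f) from rfl, etaM0_rec, hPmap]
    rw [show (cM f) v = -(ηX (d (v ⊗ₜ[k] f))) from rfl, LinearMap.neg_apply]
  -- uniqueness of operators satisfying the recursion
  have huniq : ∀ (f : Module.Dual k V) (E₁ E₂ : EndT k V W),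
      (∀ w, E₁ ((1 : TensorAlgebra k V) ⊗ₜ[k] w) = 0) →
      (∀ (v : V) (w : W) (n : ℕ) (u : TensorAlgebra k V),
        u ∈ (LinearMap.range (TensorAlgebra.ι k : V →ₗ[k] TensorAlgebra k V)) ^ n →
        E₁ ((TensorAlgebra.ι k v * u) ⊗ₜ[k] w)
          = - ηX (d (v ⊗ₜ[k] f)) (u ⊗ₜ[k] w) + ηP v (E₁ (u ⊗ₜ[k] w))) →
      (∀ w, E₂ ((1 : TensorAlgebra k V) ⊗ₜ[k] w) = 0) →
      (∀ (v : V) (w : W) (n : ℕ) (u : TensorAlgebra k V),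
        u ∈ (LinearMap.range (TensorAlgebra.ι k : V →ₗ[k] TensorAlgebra k V)) ^ n →
        E₂ ((TensorAlgebra.ι k v * u) ⊗ₜ[k] w)
          = - ηX (d (v ⊗ₜ[k] f)) (u ⊗ₜ[k] w) + ηP v (E₂ (u ⊗ₜ[k] w))) →
      E₁ = E₂ := by
    intro f E₁ E₂ h₁ r₁ h₂ r₂
    have h : E₁ - E₂ = 0 := by
      apply vanish
      · intro w
        rw [LinearMap.sub_apply, h₁ w, h₂ w, sub_zero]
      · intro v n u hu w
        rw [LinearMap.sub_apply, LinearMap.sub_apply, r₁ v w n u hu, r₂ v w n u hu, hηP,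
          map_sub]
        abel
    rw [sub_eq_zero] at h
    exact h
  -- `η₋` as a linear map
  let ηM : Module.Dual k V →ₗ[k] EndT k V W :=
    { toFun := ηM₀
      map_add' := fun f g => by
        refine huniq (f + g) _ _ (hM0one (f + g)) (fun v w n u hu => hM0rec (f + g) v u w)
          ?_ ?_
        · intro w
          rw [LinearMap.add_apply, hM0one f w, hM0one g w, add_zero]
        · intro v w n u hu
          rw [LinearMap.add_apply, LinearMap.add_apply, hM0rec f v u w, hM0rec g v u w]
          rw [show (v ⊗ₜ[k] (f + g)) = v ⊗ₜ[k] f + v ⊗ₜ[k] g from tmul_add v f g, map_add,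
            hηXadd, LinearMap.add_apply, hηP, map_add]
          abel
      map_smul' := fun r f => by
        rw [RingHom.id_apply]
        refine huniq (r • f) _ _ (hM0one (r • f)) (fun v w n u hu => hM0rec (r • f) v u w)
          ?_ ?_
        · intro w
          rw [LinearMap.smul_apply, hM0one f w, smul_zero]
        · intro v w n u hu
          rw [LinearMap.smul_apply, LinearMap.smul_apply, hM0rec f v u w,
            show (v ⊗ₜ[k] (r • f)) = r • (v ⊗ₜ[k] f) from tmul_smul r v f, map_smul,
            hηXsmul, LinearMap.smul_apply, map_smul, smul_add, smul_neg] }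
  constructor
  · -- Part (1)
    refine ⟨ηM, ⟨fun f w => hM0one f w, fun f v w n u hu => hM0rec f v u w⟩, ?_⟩
    intro y hy
    refine LinearMap.ext fun f => ?_
    exact huniq f (y f) (ηM f) (fun w => hy.1 f w) (fun v w n u hu => hy.2 f v w n u hu)
      (fun w => hM0one f w) (fun v w n u hu => hM0rec f v u w)
  · -- Part (2)
    intro ηW hW
    obtain ⟨hN1, hN2⟩ := hW
    have hPv : ∀ (v : V) (u : TensorAlgebra k V) (w : W),
        ηP v (u ⊗ₜ[k] w) = (TensorAlgebra.ι k v * u) ⊗ₜ[k] w := by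
      intro v u w
      rw [hηP, LinearMap.rTensor_tmul, LinearMap.mulLeft_apply]
    have R4 : ∀ (v : V) (f : Module.Dual k V),
        ηW f * ηP v = ηP v * ηW f - ηX (d (v ⊗ₜ[k] f)) := by
      intro v f
      apply homog_ext
      intro n u hu w
      rw [Module.End.mul_apply, LinearMap.sub_apply, Module.End.mul_apply, hPv,
        hN2 f v w n u hu]
      abel
    have R3 : ∀ (x : X) (f : Module.Dual k V),
        ηX x * ηW f - ηW f * ηX x = ηW (dualAct k V φ x f) := by
      intro x f
      have key : ∀ v : V,
          (ηX x * ηW f - ηW f * ηX x - ηW (dualAct k V φ x f)) * ηP v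
            = ηP v * (ηX x * ηW f - ηW f * ηX x - ηW (dualAct k V φ x f)) := by
        intro v
        have h4f := R4 v f
        have h4g := R4 v (dualAct k V φ x f)
        have h4q := R4 (φ x v) f
        have h2 := R2 x v
        have hcomm : ηX x * ηX (d (v ⊗ₜ[k] f))
            = ηX (d (v ⊗ₜ[k] f)) * ηX x + ηX (d (φ x v ⊗ₜ[k] f))
              + ηX (d (v ⊗ₜ[k] dualAct k V φ x f)) := by
          have h := R1 x (d (v ⊗ₜ[k] f))
          rw [hd x v f, hηXadd, sub_eq_iff_eq_add] at h
          rw [h]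
          abel
        have e1 : (ηX x * ηW f - ηW f * ηX x - ηW (dualAct k V φ x f)) * ηP v
            = ηX x * (ηW f * ηP v) - ηW f * (ηX x * ηP v)
              - ηW (dualAct k V φ x f) * ηP v := by
          simp only [mul_sub, sub_mul, mul_add, add_mul, mul_assoc]
          try abel
        rw [e1, h4f, h2, h4g]
        have e2 : ηX x * (ηP v * ηW f - ηX (d (v ⊗ₜ[k] f)))
              - ηW f * (ηP v * ηX x + ηP (φ x v))
              - (ηP v * ηW (dualAct k V φ x f) - ηX (d (v ⊗ₜ[k] dualAct k V φ x f)))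
            = (ηX x * ηP v) * ηW f - ηX x * ηX (d (v ⊗ₜ[k] f))
              - (ηW f * ηP v) * ηX x - ηW f * ηP (φ x v)
              - ηP v * ηW (dualAct k V φ x f)
              + ηX (d (v ⊗ₜ[k] dualAct k V φ x f)) := by
          simp only [mul_sub, sub_mul, mul_add, add_mul, mul_assoc]
          try abel
        rw [e2, h2, h4f, h4q, hcomm]
        simp only [mul_sub, sub_mul, mul_add, add_mul, mul_assoc]
        try abel
      have hzero : ηX x * ηW f - ηW f * ηX x - ηW (dualAct k V φ x f) = 0 := by
        apply vanish
        · intro w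
          have hx1 : ηX x ((1 : TensorAlgebra k V) ⊗ₜ[k] w)
              = (1 : TensorAlgebra k V) ⊗ₜ[k] (ρW x w) := by
            rw [hηX, LinearMap.add_apply, LinearMap.rTensor_tmul, LinearMap.lTensor_tmul,
              hD1zero, zero_tmul, zero_add]
          simp only [LinearMap.sub_apply, Module.End.mul_apply]
          rw [hN1 f w, hN1 (dualAct k V φ x f) w, hx1, hN1 f (ρW x w), map_zero]
          abel
        · intro v n u hu w
          have h := congrArg (fun E : EndT k V W => E (u ⊗ₜ[k] w)) (key v)
          simp only [Module.End.mul_apply] at h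
          rw [hPv] at h
          rw [h, hηP]
      rw [sub_eq_zero] at hzero
      exact hzero
    have hX1 : ∀ x y : X, ⁅ηXl x, ηXl y⁆ = ηXl ⁅x, y⁆ := fun x y => by
      rw [Ring.lie_def]
      exact R1 x y
    have hEq : ∀ (x : X) (t : F k V),
        Theta ηW ((δ x t : F k V) : TensorAlgebra k (V × Module.Dual k V))
          = ⁅ηXl x, Theta ηW ((t : F k V) : TensorAlgebra k (V × Module.Dual k V))⁆ := by
      intro x t
      have main : ∀ a, a ∈ F k V → ∃ h : a ∈ F k V,
          Theta ηW ((δ x (⟨a, h⟩ : F k V) : F k V) : TensorAlgebra k (V × Module.Dual k V))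
            = ⁅ηXl x, Theta ηW a⁆ := by
        intro a ha
        refine LieSubalgebra.lieSpan_induction k
          (p := fun a _ => ∃ h : a ∈ F k V,
            Theta ηW ((δ x (⟨a, h⟩ : F k V) : F k V) : TensorAlgebra k (V × Module.Dual k V))
              = ⁅ηXl x, Theta ηW a⁆) ?_ ?_ ?_ ?_ ?_ ha
        · rintro a ⟨⟨v, f⟩, rfl⟩
          refine ⟨LieSubalgebra.subset_lieSpan ⟨(v, f), rfl⟩, ?_⟩
          rw [show (⟨TensorAlgebra.ι k (v, f),
              LieSubalgebra.subset_lieSpan ⟨(v, f), rfl⟩⟩ : F k V) = ιF k V (v, f) from rfl,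
            hδ, Theta_ι, Theta_ι]
          rw [show ηXl x = ηX x from rfl, Ring.lie_def, ← R3 x f]
          have e : (Pmap (φ x v) : EndT k V W) = ηX x * ηP v - ηP v * ηX x := by
            rw [hPmap, R2]
            abel
          rw [e, hPmap]
          noncomm_ring
        · refine ⟨(F k V).zero_mem, ?_⟩
          have h0 : (⟨(0 : TensorAlgebra k (V × Module.Dual k V)),
              (F k V).zero_mem⟩ : F k V) = 0 := rfl
          have hz : ((δ x (0 : F k V) : F k V) : TensorAlgebra k (V × Module.Dual k V)) = 0 := by
            rw [map_zero]
            rfl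
          rw [h0, hz, map_zero, lie_zero]
        swap
        · rintro r a _ ⟨h, ih⟩
          refine ⟨(F k V).smul_mem r h, ?_⟩
          have hs : (⟨r • a, (F k V).smul_mem r h⟩ : F k V) = r • (⟨a, h⟩ : F k V) := rfl
          rw [hs, map_smul, F_coe_smul, map_smul, ih, map_smul,
            Ring.lie_def, Ring.lie_def, mul_smul_comm, smul_mul_assoc, smul_sub]
        · rintro a b _ _ ⟨ha, iha⟩ ⟨hb, ihb⟩
          refine ⟨(F k V).add_mem ha hb, ?_⟩
          have hadd : (⟨a + b, (F k V).add_mem ha hb⟩ : F k V)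
              = (⟨a, ha⟩ : F k V) + (⟨b, hb⟩ : F k V) := rfl
          rw [hadd, map_add, F_coe_add, map_add, iha, ihb, map_add, lie_add]
        · rintro a b _ _ ⟨ha, iha⟩ ⟨hb, ihb⟩
          refine ⟨(F k V).lie_mem ha hb, ?_⟩
          have hl : (⟨⁅a, b⁆, (F k V).lie_mem ha hb⟩ : F k V)
              = ⁅(⟨a, ha⟩ : F k V), (⟨b, hb⟩ : F k V)⁆ := rfl
          rw [hl, LieDerivation.apply_lie_eq_add, F_coe_add, map_add,
            LieSubalgebra.coe_bracket, LieSubalgebra.coe_bracket, Theta_lie, Theta_lie,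
            Theta_lie, iha, ihb,
            show ((⟨a, ha⟩ : F k V) : TensorAlgebra k (V × Module.Dual k V)) = a from rfl,
            show ((⟨b, hb⟩ : F k V) : TensorAlgebra k (V × Module.Dual k V)) = b from rfl,
            leibniz_lie (ηXl x) (Theta ηW a) (Theta ηW b)]
          abel
      obtain ⟨h, hh⟩ := main (↑t) t.2
      exact hh
    let Φ₀ : SD k δ →ₗ⁅k⁆ EndT k V W := Phi0 δ ηW ηXl hEq hX1
    have hΦ₀ : ∀ p : SD k δ, Φ₀ p
        = Theta ηW ((p.1 : F k V) : TensorAlgebra k (V × Module.Dual k V)) + ηXl p.2 :=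
      fun p => rfl
    have hrel : ∀ p ∈ rel k δ d, Φ₀ p = 0 := by
      rintro p ⟨v, f, rfl⟩
      rw [hΦ₀, LieSemidirectProduct.mk_fst, LieSemidirectProduct.mk_snd,
        LieSubalgebra.coe_bracket, Theta_lie]
      rw [show ((ιF k V (v, 0) : F k V) : TensorAlgebra k (V × Module.Dual k V))
          = TensorAlgebra.ι k ((v : V), (0 : Module.Dual k V)) from rfl]
      rw [show ((ιF k V (0, f) : F k V) : TensorAlgebra k (V × Module.Dual k V))
          = TensorAlgebra.ι k ((0 : V), f) from rfl]
      rw [Theta_ι, Theta_ι, map_zero, map_zero, add_zero, zero_add, map_neg, hPmap,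
        Ring.lie_def, show ηXl (d (v ⊗ₜ[k] f)) = ηX (d (v ⊗ₜ[k] f)) from rfl, R4]
      noncomm_ring
    have hker' : I0 k δ d ≤ Φ₀.ker := by
      apply LieSubmodule.lieSpan_le.mpr
      intro p hp
      exact LieHom.mem_ker.mpr (hrel p hp)
    have hker'' : (I0 k δ d).toSubmodule ≤ LinearMap.ker Φ₀.toLinearMap := by
      intro a ha
      exact LinearMap.mem_ker.mpr (LieHom.mem_ker.mp (hker' ha))
    refine ⟨{ toLinearMap := Submodule.liftQ (I0 k δ d).toSubmodule Φ₀.toLinearMap hker''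
              map_lie' := ?_ }, ?_, ?_, ?_⟩
    · intro a b
      obtain ⟨a, rfl⟩ := Submodule.Quotient.mk_surjective _ a
      obtain ⟨b, rfl⟩ := Submodule.Quotient.mk_surjective _ b
      rw [← LieSubmodule.Quotient.mk_bracket]
      show Submodule.liftQ _ _ hker'' (Submodule.Quotient.mk ⁅a, b⁆)
          = ⁅Submodule.liftQ _ _ hker'' (Submodule.Quotient.mk a),
             Submodule.liftQ _ _ hker'' (Submodule.Quotient.mk b)⁆
      rw [Submodule.liftQ_apply, Submodule.liftQ_apply, Submodule.liftQ_apply]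
      exact Φ₀.map_lie a b
    · intro x
      have h1 : ι₀ k δ d x = Submodule.Quotient.mk (LieSemidirectProduct.inr δ x) := rfl
      rw [h1]
      show Submodule.liftQ _ _ hker'' (Submodule.Quotient.mk (LieSemidirectProduct.inr δ x)) = ηX x
      rw [Submodule.liftQ_apply]
      show Φ₀ (LieSemidirectProduct.inr δ x) = ηX x
      rw [hΦ₀, show ((LieSemidirectProduct.inr δ x).1 : F k V) = 0 from rfl, F_coe_zero,
        map_zero, zero_add]
      rfl
    · intro v
      have h1 : gtV k δ d v
          = Submodule.Quotient.mk (LieSemidirectProduct.mk δ (ιF k V (v, 0)) 0) := rfl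
      rw [h1]
      show Submodule.liftQ _ _ hker''
          (Submodule.Quotient.mk (LieSemidirectProduct.mk δ (ιF k V (v, 0)) 0)) = ηP v
      rw [Submodule.liftQ_apply]
      show Φ₀ (LieSemidirectProduct.mk δ (ιF k V (v, 0)) 0) = ηP v
      rw [hΦ₀, LieSemidirectProduct.mk_fst, LieSemidirectProduct.mk_snd,
        show ((ιF k V (v, 0) : F k V) : TensorAlgebra k (V × Module.Dual k V))
          = TensorAlgebra.ι k ((v : V), (0 : Module.Dual k V)) from rfl,
        Theta_ι, map_zero, add_zero, map_zero, add_zero, hPmap]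
    · intro f
      have h1 : gtD k δ d f
          = Submodule.Quotient.mk (LieSemidirectProduct.mk δ (ιF k V (0, f)) 0) := rfl
      rw [h1]
      show Submodule.liftQ _ _ hker''
          (Submodule.Quotient.mk (LieSemidirectProduct.mk δ (ιF k V (0, f)) 0)) = ηW f
      rw [Submodule.liftQ_apply]
      show Φ₀ (LieSemidirectProduct.mk δ (ιF k V (0, f)) 0) = ηW f
      rw [hΦ₀, LieSemidirectProduct.mk_fst, LieSemidirectProduct.mk_snd,
        show ((ιF k V (0, f) : F k V) : TensorAlgebra k (V × Module.Dual k V))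
          = TensorAlgebra.ι k ((0 : V), f) from rfl,
        Theta_ι, map_zero, zero_add, map_zero, add_zero]

end Contragredient
end
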